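/- arXiv:1208.4614 — 4 statements merged into one kernel-verified Lean document; each statement's English description precedes it below -/
import Mathlib

section
/- Under the same hypotheses as the bootstrap lemma but with (2) replaced by the inequality $(e^{sL}f)(x) \ge f(x)$ for all $x\in M$ and $0\le s<t$ (with $f$ real-valued), one has $(e^{sL}f)(x) \ge f(x)$ for all $x\in M$ and $0\le s<T$. -/
open MeasureTheory ProbabilityTheory

lemma bind_aux {M : Type*} [MeasurableSpace M] (m : Measure M) [IsProbabilityMeasure m]
    (κ : Kernel M M) [IsMarkovKernel κ]
    (g : M → ℝ) (hg : Measurable g) (hi : Integrable g (m.bind κ)) :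
    (∫ y, g y ∂(m.bind (κ : M → Measure M)) = ∫ x, ∫ y, g y ∂(κ x) ∂m) ∧
    Integrable (fun x => ∫ y, g y ∂(κ x)) m := by
  have ha : m.bind (κ : M → Measure M) = (m ⊗ₘ κ).map Prod.snd := by
    ext s hs
    rw [Measure.bind_apply hs κ.measurable.aemeasurable, Measure.map_apply measurable_snd hs,
      Measure.compProd_apply (measurable_snd hs)]
    rfl
  have hg2 : Integrable (fun p : M × M => g p.2) (m ⊗ₘ κ) := by
    rw [ha] at hi
    exact (integrable_map_measure hg.aestronglyMeasurable measurable_snd.aemeasurable).mp hi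
  constructor
  · rw [ha, integral_map measurable_snd.aemeasurable hg.aestronglyMeasurable,
      Measure.integral_compProd hg2]
  · obtain ⟨_, h2⟩ := (Measure.integrable_compProd_iff hg2.aestronglyMeasurable).mp hg2
    have hm : StronglyMeasurable fun x => ∫ y, g y ∂(κ x) :=
      (hg.stronglyMeasurable.comp_measurable measurable_snd :
        StronglyMeasurable fun p : M × M => g p.2).integral_kernel_prod_right'
    refine h2.mono hm.aestronglyMeasurable (ae_of_all _ fun x => ?_)
    calc ‖∫ y, g y ∂(κ x)‖ ≤ ∫ y, ‖g y‖ ∂(κ x) := norm_integral_le_integral_norm _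
      _ ≤ ‖∫ y, ‖g y‖ ∂(κ x)‖ := le_abs_self _

theorem stmt_11 {M : Type*} [MeasurableSpace M]
    (μ : ℝ → M → Measure M)
    (hprob : ∀ t x, IsProbabilityMeasure (μ t x))
    (hmeas : ∀ t, Measurable (μ t))
    (hCK : ∀ s t : ℝ, 0 ≤ s → 0 ≤ t → ∀ x : M,
      μ (s + t) x = (μ s x).bind (fun z => μ t z))
    (hzero : ∀ x : M, μ 0 x = Measure.dirac x)
    (f : M → ℝ) (hf : Measurable f)
    (t T : ℝ) (ht : 0 < t) (htT : t < T)
    (hint : ∀ x : M, ∀ r : ℝ, 0 ≤ r → r < T → Integrable f (μ r x))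
    (hfix : ∀ x : M, ∀ s : ℝ, 0 ≤ s → s < t → f x ≤ ∫ y, f y ∂(μ s x)) :
    ∀ x : M, ∀ s : ℝ, 0 ≤ s → s < T → f x ≤ ∫ y, f y ∂(μ s x) := by
  have key : ∀ n : ℕ, ∀ s : ℝ, 0 ≤ s → s < T → s ≤ n * (t / 2) →
      ∀ x : M, f x ≤ ∫ y, f y ∂(μ s x) := by
    intro n
    induction n with
    | zero =>
      intro s hs hsT hsn x
      have : s = 0 := le_antisymm (by simpa using hsn) hs
      subst this
      rw [hzero, integral_dirac' f x hf.stronglyMeasurable]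
    | succ n ih =>
      intro s hs hsT hsn x
      by_cases hst : s < t
      · exact hfix x s hs hst
      · push_neg at hst
        have ht2 : (0:ℝ) < t / 2 := by linarith
        set s' := s - t / 2 with hs'
        have hs'0 : 0 ≤ s' := by simp only [hs']; linarith
        have hs'T : s' < T := by simp only [hs']; linarith
        have hs'n : s' ≤ n * (t / 2) := by
          simp only [hs']; push_cast at hsn ⊢; linarith
        haveI := hprob s' x
        set κ : ProbabilityTheory.Kernel M M := ⟨μ (t/2), hmeas (t/2)⟩ with hκ
        haveI : ProbabilityTheory.IsMarkovKernel κ := ⟨fun a => hprob (t/2) a⟩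
        have hCKs : μ s x = (μ s' x).bind (κ : M → Measure M) := by
          have := hCK s' (t/2) hs'0 ht2.le x
          rw [show s' + t/2 = s by simp [hs']] at this
          exact this
        have hintf : Integrable f ((μ s' x).bind (κ : M → Measure M)) := by
          rw [← hCKs]; exact hint x s hs hsT
        obtain ⟨heq, hintg⟩ := bind_aux (μ s' x) κ f hf hintf
        have step : ∫ y, f y ∂(μ s' x) ≤ ∫ y, f y ∂(μ s x) := by
          rw [hCKs, heq]
          exact integral_mono (hint x s' hs'0 hs'T) hintg
            (fun z => hfix z (t/2) ht2.le (by linarith))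
        exact le_trans (ih s' hs'0 hs'T hs'n x) step
  intro x s hs hsT
  obtain ⟨n, hn⟩ := exists_nat_ge (s / (t / 2))
  have ht2 : (0:ℝ) < t / 2 := by linarith
  exact key n s hs hsT (by rw [div_le_iff₀ ht2] at hn; linarith) x
end

section
/- Let $\{X_t\}$ be a continuous Markov process on a metric space $M$ and $f$ a continuous function on $M$ such that $\{f(X_t^x)\}_{t\ge 0}$ is a local martingale for every starting point $x$. If there exist $t>0$, $1<p<\infty$, and a constant $C<\infty$ such that $\int_M |f|^p\,d\mu_t^x < \infty$ and $\big(\sup_{y\in B(x,n)}|f(y)|\big)\, P_x(\tau_{B(x,n)}\le t)^{1/p} < C$ for all positive integers $n$, where $\tau_{B(x,n)}$ is the first exit time from the closed ball $B(x,n)$ and closed balls are compact, then $\mathbb{E}_x[f(X_t)] = f(x)$. -/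
open MeasureTheory Filter Topology
set_option maxHeartbeats 1000000

noncomputable def gridCeil (d u : NNReal) : NNReal := d * ⌈(u / d : NNReal)⌉₊

lemma le_gridCeil {d : NNReal} (hd : d ≠ 0) (u : NNReal) : u ≤ gridCeil d u := by
  rw [gridCeil]
  calc u = u / d * d := (div_mul_cancel₀ u hd).symm
  _ ≤ (⌈(u / d : NNReal)⌉₊ : NNReal) * d := mul_le_mul_left (Nat.le_ceil _) d
  _ = d * ⌈(u / d : NNReal)⌉₊ := mul_comm _ _

lemma gridCeil_le_add {d : NNReal} (u : NNReal) : gridCeil d u ≤ u + d := by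
  rcases eq_or_ne d 0 with rfl | hd
  · simp [gridCeil]
  · have h1 : (⌈(u / d : NNReal)⌉₊ : NNReal) ≤ u / d + 1 :=
      (Nat.ceil_lt_add_one (zero_le : (0:NNReal) ≤ u / d)).le
    calc gridCeil d u ≤ d * (u / d + 1) := mul_le_mul_right h1 d
    _ = u + d := by rw [mul_add, mul_one, mul_comm, div_mul_cancel₀ u hd]

lemma gridCeil_le_iff {d : NNReal} (hd : d ≠ 0) {u s : NNReal} :
    gridCeil d u ≤ s ↔ u ≤ d * ⌊(s / d : NNReal)⌋₊ := by
  constructor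
  · intro h
    have h2 : (⌈(u / d : NNReal)⌉₊ : NNReal) ≤ s / d := by
      rw [le_div_iff₀ hd.bot_lt, mul_comm]
      exact h
    have h3 : (⌈(u / d : NNReal)⌉₊ : ℕ) ≤ ⌊(s / d : NNReal)⌋₊ := Nat.le_floor h2
    calc u ≤ gridCeil d u := le_gridCeil hd u
    _ ≤ d * ⌊(s / d : NNReal)⌋₊ := by
        rw [gridCeil]
        exact mul_le_mul_right (by exact_mod_cast h3) d
  · intro h
    have h2 : u / d ≤ (⌊(s / d : NNReal)⌋₊ : NNReal) := by
      rw [div_le_iff₀ hd.bot_lt, mul_comm]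
      exact h
    have h3 : (⌈(u / d : NNReal)⌉₊ : NNReal) ≤ ⌊(s / d : NNReal)⌋₊ := by
      exact_mod_cast Nat.ceil_le.2 h2
    calc gridCeil d u ≤ d * ⌊(s / d : NNReal)⌋₊ := mul_le_mul_right h3 d
    _ ≤ d * (s / d) := mul_le_mul_right (Nat.floor_le zero_le) d
    _ = s := by rw [mul_comm, div_mul_cancel₀ s hd]

lemma gridFloor_le {d s : NNReal} (hd : d ≠ 0) : d * ⌊(s / d : NNReal)⌋₊ ≤ s := by
  calc d * ⌊(s / d : NNReal)⌋₊ ≤ d * (s / d) := mul_le_mul_right (Nat.floor_le zero_le) d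
  _ = s := by rw [mul_comm, div_mul_cancel₀ s hd]

lemma integral_stoppedValue_eq_of_le_const {Ω : Type*} {m0 : MeasurableSpace Ω}
    {ℱ : Filtration NNReal m0} {μ : Measure Ω} [IsProbabilityMeasure μ]
    {M : NNReal → Ω → ℝ} (hM : Martingale M ℱ μ)
    (hMcont : ∀ ω, Continuous fun s => M s ω)
    {θ : Ω → NNReal} (hθ : IsStoppingTime ℱ (fun ω => (θ ω : WithTop NNReal))) {t : NNReal}
    (hθt : ∀ ω, θ ω ≤ t)
    (hint : MeasureTheory.MemLp (stoppedValue M (fun ω => (θ ω : WithTop NNReal))) 1 μ) :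
    ∫ ω, stoppedValue M (fun ω => (θ ω : WithTop NNReal)) ω ∂μ = ∫ ω, M t ω ∂μ := by
  set d : ℕ → NNReal := fun j => (2 : NNReal)⁻¹ ^ j with hd_def
  have hd0 : ∀ j, d j ≠ 0 := fun j => by
    simp [hd_def]
  have hdlim : Tendsto d atTop (𝓝 0) := by
    rw [hd_def]
    exact NNReal.tendsto_pow_atTop_nhds_zero_of_lt_one (by rw [NNReal.inv_lt_one_iff two_ne_zero] ; exact one_lt_two)
  set ρ : ℕ → Ω → NNReal := fun j ω => min (gridCeil (d j) (θ ω)) t with hρ_def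
  have hρ_stop : ∀ j, IsStoppingTime ℱ (fun ω => (ρ j ω : WithTop NNReal)) := by
    intro j
    have h1 : IsStoppingTime ℱ (fun ω => (gridCeil (d j) (θ ω) : WithTop NNReal)) := by
      intro s
      have heq : {ω | gridCeil (d j) (θ ω) ≤ s} = {ω | θ ω ≤ d j * ⌊(s / d j : NNReal)⌋₊} := by
        ext ω; exact gridCeil_le_iff (hd0 j)
      rw [IsStoppingTime] at hθ  -- not needed maybe
      show MeasurableSet[ℱ s] _
      simp only [WithTop.coe_le_coe]
      rw [heq]
      have hθ' := hθ (d j * ⌊(s / d j : NNReal)⌋₊)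
      simp only [WithTop.coe_le_coe] at hθ'
      exact ℱ.mono (gridFloor_le (hd0 j)) _ hθ'
    have h2 := h1.min_const t
    simp only [← WithTop.coe_min] at h2
    exact h2
  have hρ_le : ∀ j, ∀ ω, ρ j ω ≤ t := fun j ω => min_le_right _ _
  have hρ_ge : ∀ j ω, θ ω ≤ ρ j ω := fun j ω => le_min (le_gridCeil (hd0 j) _) (hθt ω)
  have hρ_count : ∀ j, (Set.range (fun ω => (ρ j ω : WithTop NNReal))).Countable := by
    intro j
    apply Set.Countable.mono _
      (Set.countable_range (fun n : ℕ => ((min (d j * n) t : NNReal) : WithTop NNReal)))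
    rintro _ ⟨ω, rfl⟩
    exact ⟨⌈(θ ω / d j : NNReal)⌉₊, rfl⟩
  have hOS : ∀ j, stoppedValue M (fun ω => (ρ j ω : WithTop NNReal)) =ᵐ[μ]
      μ[M t | ((hρ_stop j).measurableSpace)] := fun j =>
    hM.stoppedValue_ae_eq_condExp_of_le_const_of_countable_range (hρ_stop j)
      (fun ω => WithTop.coe_le_coe.2 (hρ_le j ω))
      (hρ_count j)
  have hprog : ProgMeasurable ℱ M := hM.stronglyAdapted.progMeasurable_of_continuous hMcont
  have hmeas_ρ : ∀ j, AEStronglyMeasurable (stoppedValue M (fun ω => (ρ j ω : WithTop NNReal))) μ := fun j =>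
    ((stronglyMeasurable_stoppedValue_of_le hprog (hρ_stop j)
      (fun ω => WithTop.coe_le_coe.2 (hρ_le j ω))).mono
      (ℱ.le t)).aestronglyMeasurable
  have hui : UnifIntegrable (fun j => stoppedValue M (fun ω => (ρ j ω : WithTop NNReal))) 1 μ := by
    have h2 := ((hM.integrable t).uniformIntegrable_condExp
      (fun j => (hρ_stop j).measurableSpace_le)).2.1
    exact h2.ae_eq (fun j => (hOS j).symm)
  have hconv : ∀ ω, Tendsto (fun j => stoppedValue M (fun ω => (ρ j ω : WithTop NNReal)) ω) atTop (𝓝 (stoppedValue M (fun ω => (θ ω : WithTop NNReal)) ω)) := by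
    intro ω
    have h1 : Tendsto (fun j => ρ j ω) atTop (𝓝 (θ ω)) := by
      have hub : ∀ j, ρ j ω ≤ θ ω + d j := fun j => (min_le_left _ _).trans (gridCeil_le_add _)
      have h2 : Tendsto (fun j => θ ω + d j) atTop (𝓝 (θ ω + 0)) := tendsto_const_nhds.add hdlim
      rw [add_zero] at h2
      exact tendsto_of_tendsto_of_tendsto_of_le_of_le tendsto_const_nhds h2
        (fun j => hρ_ge j ω) hub
    exact ((hMcont ω).tendsto (θ ω)).comp h1
  have hL1 : Tendsto (fun j => eLpNorm (stoppedValue M (fun ω => (ρ j ω : WithTop NNReal)) - stoppedValue M (fun ω => (θ ω : WithTop NNReal))) 1 μ) atTop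
      (𝓝 0) :=
    tendsto_Lp_finite_of_tendsto_ae le_rfl ENNReal.one_ne_top hmeas_ρ hint hui
      (Filter.Eventually.of_forall hconv)
  have hInt : Tendsto (fun j => ∫ ω, stoppedValue M (fun ω => (ρ j ω : WithTop NNReal)) ω ∂μ) atTop
      (𝓝 (∫ ω, stoppedValue M (fun ω => (θ ω : WithTop NNReal)) ω ∂μ)) := by
    apply tendsto_integral_of_L1 _ (memLp_one_iff_integrable.1 hint).1
    · exact Filter.Eventually.of_forall (fun j => integrable_condExp.congr (hOS j).symm)
    · have h3 : ∀ j, (∫⁻ ω, ‖stoppedValue M (fun ω => (ρ j ω : WithTop NNReal)) ω - stoppedValue M (fun ω => (θ ω : WithTop NNReal)) ω‖ₑ ∂μ)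
          = eLpNorm (stoppedValue M (fun ω => (ρ j ω : WithTop NNReal)) - stoppedValue M (fun ω => (θ ω : WithTop NNReal))) 1 μ := fun j => by
        rw [eLpNorm_one_eq_lintegral_enorm]; rfl
      simp_rw [h3]; exact hL1
  have hconst : ∀ j, ∫ ω, stoppedValue M (fun ω => (ρ j ω : WithTop NNReal)) ω ∂μ = ∫ ω, M t ω ∂μ := fun j => by
    rw [integral_congr_ae (hOS j), integral_condExp ((hρ_stop j).measurableSpace_le)]
  simp_rw [hconst] at hInt
  exact tendsto_nhds_unique hInt tendsto_const_nhds

theorem stmt_12 {M : Type*} [MetricSpace M] [ProperSpace M]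
    [MeasurableSpace M] [BorelSpace M]
    {Ω : Type*} {m0 : MeasurableSpace Ω}
    (ℱ : Filtration NNReal m0)
    (P : M → Measure Ω) (hP : ∀ x, IsProbabilityMeasure (P x))
    (X : NNReal → Ω → M)
    (hXmeas : ∀ t, Measurable (X t))
    (hcont : ∀ ω, Continuous fun t => X t ω)
    (hstart : ∀ x : M, ∀ᵐ ω ∂P x, X 0 ω = x)
    (f : M → ℝ) (hf : Continuous f)
    -- {f(X_t^x)} is a local martingale for every starting point x:
    (hlocmart : ∀ x : M, ∃ σ : ℕ → Ω → NNReal,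
      (∀ n, IsStoppingTime ℱ (fun ω => (σ n ω : WithTop NNReal))) ∧ (∀ ω, Monotone fun n => σ n ω) ∧
      (∀ ω, Tendsto (fun n => σ n ω) atTop atTop) ∧
      ∀ n, Martingale
        (MeasureTheory.stoppedProcess (fun t ω => f (X t ω)) (fun ω => (σ n ω : WithTop NNReal))) ℱ (P x))
    (x : M) (t : NNReal) (p : ℝ) (hp : 1 < p)
    (τ : ℕ → Ω → NNReal)
    -- τ n is the first exit time from the closed ball B(x,n):
    (hτdef : ∀ (n : ℕ) (ω : Ω), τ n ω = sInf {s : NNReal | (n : ℝ) < dist x (X s ω)})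
    (hτstop : ∀ n, IsStoppingTime ℱ (fun ω => (τ n ω : WithTop NNReal)))
    -- stochastic completeness:
    (hsc : Tendsto (fun n : ℕ => (P x) {ω | τ n ω ≤ t}) atTop (nhds 0))
    (hfp : ∫⁻ y, ENNReal.ofReal (|f y| ^ p) ∂((P x).map (X t)) < ⊤)
    (C : ℝ)
    (hbdd : ∀ n : ℕ, 0 < n →
      (⨆ y ∈ Metric.closedBall x n, |f y|) *
        ((P x) {ω | τ n ω ≤ t}).toReal ^ (1 / p) < C) :
    ∫ ω, f (X t ω) ∂(P x) = f x := by
  classical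
  haveI := hP x
  have hp0 : (0:ℝ) < p := lt_trans one_pos hp
  -- running maximum of the exit times
  set τs : ℕ → Ω → NNReal :=
    fun n => Nat.rec (τ 0) (fun k ih ω => max (ih ω) (τ (k+1) ω)) n with hτs_def
  have hτs_stop : ∀ n, IsStoppingTime ℱ (fun ω => (τs n ω : WithTop NNReal)) := by
    intro n
    induction n with
    | zero => exact hτstop 0
    | succ k ih =>
      have h := ih.max (hτstop (k+1))
      simp only [← WithTop.coe_max] at h
      exact h
  have hτ_le_τs : ∀ n ω, τ n ω ≤ τs n ω := by
    intro n ω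
    cases n with
    | zero => exact le_rfl
    | succ k => exact le_max_right _ _
  have hτs_cases : ∀ n ω s, s ≤ τs n ω → ∃ l, l ≤ n ∧ s ≤ τ l ω := by
    intro n
    induction n with
    | zero => exact fun ω s hs => ⟨0, le_rfl, hs⟩
    | succ k ih =>
      intro ω s hs
      rcases le_max_iff.1 hs with h | h
      · obtain ⟨l, hl, h'⟩ := ih ω s h
        exact ⟨l, hl.trans (Nat.le_succ k), h'⟩
      · exact ⟨k+1, le_rfl, h⟩
  -- a.e. the path stays in the closed ball up to the exit time
  have hball : ∀ᵐ ω ∂P x, ∀ (l : ℕ) (s : NNReal), s ≤ τ l ω → dist x (X s ω) ≤ l := by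
    filter_upwards [hstart x] with ω hω
    intro l s hs
    have hg : Continuous fun u : NNReal => dist x (X u ω) :=
      continuous_const.dist (hcont ω)
    rcases eq_or_ne s 0 with rfl | hs0
    · rw [hω, dist_self]
      positivity
    · have h1 : Set.Ico (0:NNReal) s ⊆ {u : NNReal | dist x (X u ω) ≤ l} := by
        intro u hu
        simp only [Set.mem_setOf_eq]
        by_contra hcon
        push_neg at hcon
        have h2 : τ l ω ≤ u := by
          rw [hτdef]
          exact csInf_le (OrderBot.bddBelow _) hcon
        exact absurd (hu.2.trans_le (hs.trans h2)) (lt_irrefl u)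
      have hclosed : IsClosed {u : NNReal | dist x (X u ω) ≤ l} :=
        isClosed_le hg continuous_const
      have h3 : s ∈ closure (Set.Ico (0:NNReal) s) := by
        rw [closure_Ico (Ne.symm hs0)]
        exact Set.right_mem_Icc.2 (zero_le : (0:NNReal) ≤ s)
      have h4 := closure_mono h1 h3
      rwa [hclosed.closure_eq] at h4
  have hballs : ∀ᵐ ω ∂P x, ∀ (n : ℕ) (s : NNReal), s ≤ τs n ω → dist x (X s ω) ≤ n := by
    filter_upwards [hball] with ω hω n s hs
    obtain ⟨l, hln, h'⟩ := hτs_cases n ω s hs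
    exact (hω l s h').trans (Nat.cast_le.2 hln)
  -- the sup of |f| on closed balls
  set K : ℕ → ℝ := fun n => ⨆ y ∈ Metric.closedBall x n, |f y| with hK_def
  have hK : ∀ (n : ℕ) (y : M), y ∈ Metric.closedBall x n → |f y| ≤ K n := by
    intro n
    obtain ⟨B, hB⟩ := (isCompact_closedBall x (n:ℝ)).exists_bound_of_continuousOn
      (hf.abs.continuousOn)
    have hbdd2 : BddAbove (Set.range fun y => ⨆ _ : y ∈ Metric.closedBall x (n:ℝ), |f y|) := by
      refine ⟨max B 0, ?_⟩
      rintro _ ⟨y, rfl⟩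
      show (⨆ _ : y ∈ Metric.closedBall x (n:ℝ), |f y|) ≤ max B 0
      by_cases hy : y ∈ Metric.closedBall x (n:ℝ)
      · rw [ciSup_pos hy]
        refine le_max_of_le_left ?_
        have := hB y hy
        rwa [Real.norm_eq_abs, abs_abs] at this
      · haveI : IsEmpty (y ∈ Metric.closedBall x (n:ℝ)) := ⟨fun h => hy h⟩
        rw [Real.iSup_of_isEmpty]
        exact le_max_right _ _
    intro y hy
    have h5 : (⨆ _ : y ∈ Metric.closedBall x (n:ℝ), |f y|) ≤ K n := le_ciSup hbdd2 y
    rwa [ciSup_pos hy] at h5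
  have hK0 : ∀ n : ℕ, 0 ≤ K n := fun n =>
    (abs_nonneg (f x)).trans (hK n x (Metric.mem_closedBall_self (by positivity)))
  -- integrability of f(X_t)
  have hfXt_meas : Measurable fun ω => f (X t ω) := hf.measurable.comp (hXmeas t)
  have hfXt_int : Integrable (fun ω => f (X t ω)) (P x) := by
    have hcont2 : Continuous fun y => ENNReal.ofReal (|f y| ^ p) :=
      ENNReal.continuous_ofReal.comp (hf.abs.rpow_const (fun y => Or.inr hp0.le))
    have h1 : ∫⁻ ω, ENNReal.ofReal (|f (X t ω)| ^ p) ∂(P x) < ⊤ := by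
      rw [← lintegral_map hcont2.measurable (hXmeas t)]
      exact hfp
    have hmem : MemLp (fun ω => f (X t ω)) (ENNReal.ofReal p) (P x) := by
      constructor
      · exact hfXt_meas.aestronglyMeasurable
      · rw [eLpNorm_eq_lintegral_rpow_enorm_toReal (by simp [hp0]) ENNReal.ofReal_ne_top]
        rw [ENNReal.toReal_ofReal hp0.le]
        refine ENNReal.rpow_lt_top_of_nonneg (by positivity) ?_
        have heq : ∀ ω, (‖f (X t ω)‖ₑ) ^ p = ENNReal.ofReal (|f (X t ω)| ^ p) := by
          intro ω
          rw [← ofReal_norm_eq_enorm, Real.norm_eq_abs,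
            ENNReal.ofReal_rpow_of_nonneg (abs_nonneg _) hp0.le]
        simp_rw [heq]
        exact h1.ne
    exact hmem.integrable (ENNReal.one_le_ofReal.2 hp.le)
  -- the localizing sequence
  obtain ⟨σ, hσ_stop, hσ_mono, hσ_tendsto, hσ_mart⟩ := hlocmart x
  set Mk : ℕ → NNReal → Ω → ℝ :=
    fun k => MeasureTheory.stoppedProcess (fun s ω => f (X s ω)) (fun ω => (σ k ω : WithTop NNReal)) with hMk_def
  have hMk_cont : ∀ k ω, Continuous fun s => Mk k s ω := by
    intro k ω
    have h6 : (fun s => Mk k s ω) = fun s => f (X (min s (σ k ω)) ω) := rfl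
    rw [h6]
    exact hf.comp ((hcont ω).comp (continuous_id.min continuous_const))
  -- main identity
  have hmain : ∀ n : ℕ,
      AEStronglyMeasurable (fun ω => f (X (min (τs n ω) t) ω)) (P x) ∧
      ∫ ω, f (X (min (τs n ω) t) ω) ∂(P x) = f x := by
    intro n
    set θ : Ω → NNReal := fun ω => min (τs n ω) t with hθ_def
    have hθ : IsStoppingTime ℱ (fun ω => (θ ω : WithTop NNReal)) := by
      have h := (hτs_stop n).min_const t
      simp only [← WithTop.coe_min] at h
      exact h
    have hθt : ∀ ω, θ ω ≤ t := fun ω => min_le_right _ _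
    have hbd : ∀ᵐ ω ∂P x, ∀ u : NNReal, u ≤ θ ω → |f (X u ω)| ≤ K n := by
      filter_upwards [hballs] with ω hω u hu
      refine hK n (X u ω) ?_
      rw [Metric.mem_closedBall, dist_comm]
      exact hω n u (hu.trans (min_le_left _ _))
    have hFmeas : ∀ k, AEStronglyMeasurable (stoppedValue (Mk k) (fun ω => (θ ω : WithTop NNReal))) (P x) := fun k =>
      ((stronglyMeasurable_stoppedValue_of_le
        ((hσ_mart k).stronglyAdapted.progMeasurable_of_continuous (hMk_cont k)) hθ (fun ω => WithTop.coe_le_coe.2 (hθt ω))).mono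
        (ℱ.le t)).aestronglyMeasurable
    have hFbd : ∀ k, ∀ᵐ ω ∂P x, ‖stoppedValue (Mk k) (fun ω => (θ ω : WithTop NNReal)) ω‖ ≤ K n := by
      intro k
      filter_upwards [hbd] with ω hω
      have h7 : stoppedValue (Mk k) (fun ω => (θ ω : WithTop NNReal)) ω = f (X (min (θ ω) (σ k ω)) ω) := rfl
      rw [Real.norm_eq_abs, h7]
      exact hω _ (min_le_left _ _)
    have hk_id : ∀ k, ∫ ω, stoppedValue (Mk k) (fun ω => (θ ω : WithTop NNReal)) ω ∂(P x) = f x := by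
      intro k
      have hmemk : MemLp (stoppedValue (Mk k) (fun ω => (θ ω : WithTop NNReal))) 1 (P x) :=
        MemLp.of_bound (hFmeas k) (K n) (hFbd k)
      have h1 := integral_stoppedValue_eq_of_le_const (hσ_mart k) (hMk_cont k) hθ hθt hmemk
      have h2 : ∫ ω, Mk k 0 ω ∂(P x) = ∫ ω, Mk k t ω ∂(P x) := by
        rw [integral_congr_ae ((hσ_mart k).condExp_ae_eq (zero_le : (0:NNReal) ≤ t)).symm,
          integral_condExp (ℱ.le 0)]
      have h3 : ∫ ω, Mk k 0 ω ∂(P x) = f x := by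
        have he : (fun ω => Mk k 0 ω) =ᵐ[P x] fun _ => f x := by
          filter_upwards [hstart x] with ω hω
          have h8 : Mk k 0 ω = f (X (min 0 (σ k ω)) ω) := rfl
          rw [h8, min_eq_left zero_le, hω]
        rw [integral_congr_ae he, integral_const, probReal_univ, one_smul]
      rw [h1, ← h2, h3]
    have hconv : ∀ᵐ ω ∂P x, Tendsto (fun k => stoppedValue (Mk k) (fun ω => (θ ω : WithTop NNReal)) ω) atTop
        (𝓝 (f (X (θ ω) ω))) := by
      refine Filter.Eventually.of_forall (fun ω => ?_)
      have h4 : ∀ᶠ k in atTop, stoppedValue (Mk k) (fun ω => (θ ω : WithTop NNReal)) ω = f (X (θ ω) ω) := by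
        filter_upwards [(hσ_tendsto ω).eventually_ge_atTop (θ ω)] with k hk
        have h9 : stoppedValue (Mk k) (fun ω => (θ ω : WithTop NNReal)) ω = f (X (min (θ ω) (σ k ω)) ω) := rfl
        rw [h9, min_eq_left hk]
      exact Tendsto.congr' (h4.mono fun k hk => hk.symm) tendsto_const_nhds
    have hDCT := tendsto_integral_of_dominated_convergence (fun _ => K n)
      hFmeas (integrable_const (K n)) hFbd hconv
    constructor
    · exact aestronglyMeasurable_of_tendsto_ae atTop hFmeas hconv
    · have h10 : (fun k => ∫ ω, stoppedValue (Mk k) (fun ω => (θ ω : WithTop NNReal)) ω ∂(P x)) = fun _ => f x :=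
        funext hk_id
      rw [h10] at hDCT
      exact (tendsto_nhds_unique hDCT tendsto_const_nhds)
  -- final estimate
  set I : ℝ := ∫ ω, f (X t ω) ∂(P x) with hI_def
  set A : ℕ → Set Ω := fun n => {ω | τs n ω ≤ t} with hA_def
  have hA_meas : ∀ n, MeasurableSet (A n) := fun n => ℱ.le t _
    (by simpa only [WithTop.coe_le_coe] using (hτs_stop n) t)
  have hA_sub : ∀ n, A n ⊆ {ω | τ n ω ≤ t} := fun n ω hω => le_trans (hτ_le_τs n ω) hω
  have hgn_int : ∀ n, Integrable (fun ω => f (X (min (τs n ω) t) ω)) (P x) := by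
    intro n
    refine memLp_one_iff_integrable.1 (MemLp.of_bound (hmain n).1 (K n) ?_)
    filter_upwards [hballs] with ω hω
    rw [Real.norm_eq_abs]
    refine hK n _ ?_
    rw [Metric.mem_closedBall, dist_comm]
    exact hω n _ (min_le_left _ _)
  have hest : ∀ n : ℕ, 1 ≤ n → |f x - I| ≤
      K n * ((P x) (A n)).toReal + ∫ ω in A n, |f (X t ω)| ∂(P x) := by
    intro n hn
    have h5 : f x - I = ∫ ω, (f (X (min (τs n ω) t) ω) - f (X t ω)) ∂(P x) := by
      rw [integral_sub (hgn_int n) hfXt_int, (hmain n).2]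
    rw [h5]
    have hptw : (fun ω => |f (X (min (τs n ω) t) ω) - f (X t ω)|) ≤ᵐ[P x]
        (A n).indicator (fun ω => K n + |f (X t ω)|) := by
      filter_upwards [hballs] with ω hω
      by_cases hmem : ω ∈ A n
      · rw [Set.indicator_of_mem hmem]
        refine (abs_sub _ _).trans ?_
        gcongr
        refine hK n _ ?_
        rw [Metric.mem_closedBall, dist_comm]
        exact hω n _ (min_le_left _ _)
      · rw [Set.indicator_of_notMem hmem]
        have h11 : min (τs n ω) t = t := min_eq_right (le_of_not_ge hmem)
        rw [h11, sub_self, abs_zero]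
    have hint1 : Integrable (fun ω => |f (X (min (τs n ω) t) ω) - f (X t ω)|) (P x) :=
      ((hgn_int n).sub hfXt_int).abs
    have hint2 : Integrable ((A n).indicator (fun ω => K n + |f (X t ω)|)) (P x) :=
      ((integrable_const (K n)).add hfXt_int.abs).indicator (hA_meas n)
    calc |∫ ω, (f (X (min (τs n ω) t) ω) - f (X t ω)) ∂(P x)|
        ≤ ∫ ω, |f (X (min (τs n ω) t) ω) - f (X t ω)| ∂(P x) :=
          by simpa [Real.norm_eq_abs] using
            norm_integral_le_integral_norm (fun ω => f (X (min (τs n ω) t) ω) - f (X t ω))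
      _ ≤ ∫ ω, (A n).indicator (fun ω => K n + |f (X t ω)|) ω ∂(P x) :=
          integral_mono_ae hint1 hint2 hptw
      _ = ∫ ω in A n, (K n + |f (X t ω)|) ∂(P x) := integral_indicator (hA_meas n)
      _ = K n * ((P x) (A n)).toReal + ∫ ω in A n, |f (X t ω)| ∂(P x) := by
          rw [integral_add (integrable_const (K n)) (hfXt_int.abs.integrableOn)]
          rw [setIntegral_const, smul_eq_mul, mul_comm]; rfl
  -- the bound tends to 0
  set a : ℕ → ℝ := fun n => ((P x) {ω | τ n ω ≤ t}).toReal with ha_def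
  have hr : (0:ℝ) < 1 - 1/p := by
    have : 1/p < 1 := by
      rw [div_lt_one hp0]
      exact hp
    linarith
  have hPA : Tendsto (fun n => (P x) (A n)) atTop (𝓝 0) :=
    tendsto_of_tendsto_of_tendsto_of_le_of_le tendsto_const_nhds hsc
      (fun n => zero_le) (fun n => measure_mono (hA_sub n))
  have ha0 : Tendsto a atTop (𝓝 0) := by
    have := (ENNReal.tendsto_toReal ENNReal.zero_ne_top).comp hsc
    exact this
  have hterm1 : Tendsto (fun n => K n * ((P x) (A n)).toReal) atTop (𝓝 0) := by
    have hub : ∀ᶠ n in atTop, K n * ((P x) (A n)).toReal ≤ C * a n ^ (1 - 1/p) := by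
      rw [eventually_atTop]
      refine ⟨1, fun n hn => ?_⟩
      have h7 := hbdd n hn
      have haK : K n * a n ^ (1/p) < C := h7
      have hPAa : ((P x) (A n)).toReal ≤ a n :=
        ENNReal.toReal_mono (measure_ne_top _ _) (measure_mono (hA_sub n))
      have han : (0:ℝ) ≤ a n := ENNReal.toReal_nonneg
      rcases eq_or_lt_of_le han with h0 | h0
      · have h12 : ((P x) (A n)).toReal = 0 := le_antisymm (by rw [← h0] at hPAa; exact hPAa)
          ENNReal.toReal_nonneg
        rw [h12, mul_zero, ← h0, Real.zero_rpow hr.ne', mul_zero]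
      · have hsplit : K n * a n = (K n * a n ^ (1/p)) * a n ^ (1 - 1/p) := by
          rw [mul_assoc, ← Real.rpow_add h0, show 1/p + (1 - 1/p) = (1:ℝ) by ring,
            Real.rpow_one]
        calc K n * ((P x) (A n)).toReal ≤ K n * a n := by
              exact mul_le_mul_of_nonneg_left hPAa (hK0 n)
          _ = (K n * a n ^ (1/p)) * a n ^ (1 - 1/p) := hsplit
          _ ≤ C * a n ^ (1 - 1/p) := by
              refine mul_le_mul_of_nonneg_right haK.le (Real.rpow_nonneg han _)
    have hlb : ∀ᶠ n in atTop, 0 ≤ K n * ((P x) (A n)).toReal := by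
      refine Filter.Eventually.of_forall (fun n => ?_)
      exact mul_nonneg (hK0 n) ENNReal.toReal_nonneg
    have hCr : Tendsto (fun n => C * a n ^ (1 - 1/p)) atTop (𝓝 0) := by
      have h13 : Tendsto (fun n => a n ^ (1 - 1/p)) atTop (𝓝 0) := by
        have h14 := ((Real.continuousAt_rpow_const 0 (1 - 1/p) (Or.inr hr.le)).tendsto).comp ha0
        rw [Real.zero_rpow hr.ne'] at h14
        exact h14
      have := h13.const_mul C
      simpa using this
    exact tendsto_of_tendsto_of_tendsto_of_le_of_le' tendsto_const_nhds hCr hlb hub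
  have hterm2 : Tendsto (fun n => ∫ ω in A n, |f (X t ω)| ∂(P x)) atTop (𝓝 0) :=
    hfXt_int.abs.tendsto_setIntegral_nhds_zero hPA
  have hb : Tendsto (fun n => K n * ((P x) (A n)).toReal +
      ∫ ω in A n, |f (X t ω)| ∂(P x)) atTop (𝓝 0) := by
    have := hterm1.add hterm2
    simpa using this
  have h8 : |f x - I| ≤ 0 :=
    ge_of_tendsto hb (eventually_atTop.2 ⟨1, fun n hn => hest n hn⟩)
  have h9 : f x - I = 0 := abs_nonpos_iff.1 h8
  rw [hI_def] at h9
  linarith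
end

section
/- Let $\{X_t\}$ be a continuous Markov process on a metric space $M$ and $f$ a continuous real-valued function such that $\{f(X_t^x)\}_{t\ge 0}$ is a local submartingale for every starting point $x$. Under the same $L^p$-boundedness and exit-time decay hypotheses as in the harmonic case, $\mathbb{E}_x[f(X_t)] \ge f(x)$. -/
open MeasureTheory Filter Set Topology

namespace StmtAux

/-- Optional sampling inequality for a continuous-path submartingale indexed by `ℝ≥0`,
at a bounded stopping time. -/
theorem os_cont {Ω : Type*} {m0 : MeasurableSpace Ω} (ℱ : Filtration NNReal m0)
    (μ : Measure Ω) [IsProbabilityMeasure μ]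
    {Y : NNReal → Ω → ℝ} (hY : Submartingale Y ℱ μ)
    (hYc : ∀ ω, Continuous fun s => Y s ω)
    {ρ : Ω → NNReal} (hρ : IsStoppingTime ℱ (fun ω => (ρ ω : WithTop NNReal))) {t : NNReal} (hρt : ∀ ω, ρ ω ≤ t)
    (hint : Integrable (stoppedValue Y (fun ω => (ρ ω : WithTop NNReal))) μ) :
    ∫ ω, Y 0 ω ∂μ ≤ ∫ ω, stoppedValue Y (fun ω => (ρ ω : WithTop NNReal)) ω ∂μ := by
  classical
  have h2k : ∀ k : ℕ, (0:ℝ) < 2 ^ k := fun k => by positivity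
  set e : ℕ → ℕ → NNReal := fun k j => (j : NNReal) / 2 ^ k with he_def
  have he_coe : ∀ k j, ((e k j : NNReal) : ℝ) = (j : ℝ) / 2 ^ k := by
    intro k j
    simp [he_def]
  have he_mono : ∀ k, Monotone (e k) := by
    intro k i j hij
    simp only [he_def, div_eq_mul_inv]
    exact mul_le_mul_left (by exact_mod_cast hij) _
  set 𝒢 : ℕ → Filtration ℕ m0 := fun k =>
    ⟨fun j => ℱ (e k j), fun i j hij => ℱ.mono (he_mono k hij), fun j => ℱ.le _⟩ with h𝒢_def
  have hpull : ∀ {W : NNReal → Ω → ℝ}, Submartingale W ℱ μ →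
      ∀ k, Submartingale (fun j => W (e k j)) (𝒢 k) μ := by
    intro W hW k
    exact ⟨fun j => hW.1 (e k j), fun i j hij => hW.2.1 _ _ (he_mono k hij),
      fun j => hW.2.2 _⟩
  set d : ℕ → Ω → ℕ := fun k ω => ⌈(ρ ω : ℝ) * 2 ^ k⌉₊ with hd_def
  set r : ℕ → Ω → NNReal := fun k ω => e k (d k ω) with hr_def
  have hρ_le_r : ∀ k ω, ρ ω ≤ r k ω := by
    intro k ω
    rw [← NNReal.coe_le_coe, hr_def, he_coe, le_div_iff₀ (h2k k)]
    exact Nat.le_ceil _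
  have hr_le : ∀ k ω, ((r k ω : NNReal) : ℝ) ≤ (ρ ω : ℝ) + ((2:ℝ) ^ k)⁻¹ := by
    intro k ω
    rw [hr_def, he_coe, div_le_iff₀ (h2k k)]
    have h := (Nat.ceil_lt_add_one (by positivity : (0:ℝ) ≤ (ρ ω : ℝ) * 2 ^ k)).le
    calc ((⌈(ρ ω : ℝ) * 2 ^ k⌉₊ : ℕ) : ℝ) ≤ (ρ ω : ℝ) * 2 ^ k + 1 := h
      _ = ((ρ ω : ℝ) + ((2:ℝ)^k)⁻¹) * 2 ^ k := by field_simp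
  have hr_tendsto : ∀ ω, Tendsto (fun k => r k ω) atTop (𝓝 (ρ ω)) := by
    intro ω
    rw [← NNReal.tendsto_coe]
    refine tendsto_of_tendsto_of_tendsto_of_le_of_le (g := fun _ => ((ρ ω : NNReal) : ℝ))
      (h := fun k => (ρ ω : ℝ) + ((2:ℝ) ^ k)⁻¹) tendsto_const_nhds ?_ ?_ ?_
    · have h1 : Tendsto (fun k : ℕ => ((2:ℝ) ^ k)⁻¹) atTop (𝓝 0) := by
        exact (tendsto_pow_atTop_atTop_of_one_lt (by norm_num : (1:ℝ) < 2)).inv_tendsto_atTop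
      simpa using tendsto_const_nhds.add h1
    · exact fun k => NNReal.coe_le_coe.2 (hρ_le_r k ω)
    · exact fun k => hr_le k ω
  have hd_stop : ∀ k, IsStoppingTime (𝒢 k) (fun ω => ((d k ω : ℕ) : WithTop ℕ)) := by
    intro k j
    have hset : {ω | ((d k ω : ℕ) : WithTop ℕ) ≤ (j : WithTop ℕ)}
        = {ω | ((ρ ω : NNReal) : WithTop NNReal) ≤ ((e k j : NNReal) : WithTop NNReal)} := by
      ext ω
      simp only [Set.mem_setOf_eq, WithTop.coe_le_coe, Nat.cast_le, hd_def, Nat.ceil_le, ← NNReal.coe_le_coe, he_coe,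
        le_div_iff₀ (h2k k)]
    show MeasurableSet[(𝒢 k) j] {ω | ((d k ω : ℕ) : WithTop ℕ) ≤ (j : WithTop ℕ)}
    rw [hset]
    exact hρ (e k j)
  set N : ℕ → ℕ := fun k => ⌈(t : ℝ) * 2 ^ k⌉₊ with hN_def
  have hd_bdd : ∀ k ω, d k ω ≤ N k := fun k ω =>
    Nat.ceil_le_ceil (mul_le_mul_of_nonneg_right (NNReal.coe_le_coe.2 (hρt ω)) (h2k k).le)
  have heN : ∀ k, e k (N k) ≤ t + 1 := by
    intro k
    rw [← NNReal.coe_le_coe, he_coe]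
    rw [div_le_iff₀ (h2k k)]
    have h1 : (1:ℝ) ≤ 2 ^ k := one_le_pow₀ (by norm_num)
    calc ((⌈(t:ℝ) * 2^k⌉₊ : ℕ) : ℝ) ≤ (t:ℝ)*2^k + 1 := (Nat.ceil_lt_add_one (by positivity)).le
      _ ≤ ((t:ℝ) + 1) * 2^k := by rw [add_mul, one_mul]; linarith
      _ = ((t + 1 : NNReal) : ℝ) * 2^k := by push_cast; ring
  have hZ : ∀ k, Submartingale (fun j => Y (e k j)) (𝒢 k) μ := fun k => hpull hY k
  set sv : ℕ → Ω → ℝ := fun k ω => Y (r k ω) ω with hsv_def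
  have hsv_eq : ∀ k, stoppedValue (fun j => Y (e k j)) (fun ω => ((d k ω : ℕ) : WithTop ℕ)) = sv k := fun k => rfl
  have hsv_int : ∀ k, Integrable (sv k) μ := by
    intro k
    rw [← hsv_eq]
    exact (hZ k).integrable_stoppedValue (hd_stop k) (N := N k) (fun ω => WithTop.coe_le_coe.2 (hd_bdd k ω))
  have hsv_meas : ∀ k, StronglyMeasurable (sv k) := by
    intro k
    have h := stronglyMeasurable_stoppedValue_of_le
      ((hZ k).1.progMeasurable_of_discrete) (hd_stop k) (n := N k) (fun ω => WithTop.coe_le_coe.2 (hd_bdd k ω))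
    rw [hsv_eq] at h
    exact h.mono ((𝒢 k).le _)
  have hsv_conv : ∀ ω, Tendsto (fun k => sv k ω) atTop (𝓝 (stoppedValue Y (fun ω => (ρ ω : WithTop NNReal)) ω)) := fun ω =>
    ((hYc ω).tendsto (ρ ω)).comp (hr_tendsto ω)
  have hstep1 : ∀ k, ∫ ω, Y 0 ω ∂μ ≤ ∫ ω, sv k ω ∂μ := by
    intro k
    have h0 : stoppedValue (fun j => Y (e k j)) (fun _ : Ω => ((0 : ℕ) : WithTop ℕ)) = Y 0 := by
      funext ω
      simp [stoppedValue, he_def]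
    have h := (hZ k).expected_stoppedValue_mono (isStoppingTime_const (𝒢 k) 0)
      (hd_stop k) (fun ω => WithTop.coe_le_coe.2 (Nat.zero_le _)) (N := N k)
      (fun ω => WithTop.coe_le_coe.2 (hd_bdd k ω))
    rw [hsv_eq] at h
    exact le_trans (le_of_eq (congrArg (fun g => ∫ ω, g ω ∂μ) h0.symm)) h
  refine le_of_forall_pos_le_add ?_
  intro ε hε
  -- choose a truncation level c
  have htr : Tendsto (fun c : ℕ => ∫ ω, max (Y (t+1) ω - (c:ℝ)) 0 ∂μ) atTop (𝓝 0) := by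
    have h := tendsto_integral_of_dominated_convergence (μ := μ)
        (F := fun c : ℕ => fun ω => max (Y (t+1) ω - (c:ℝ)) 0) (f := fun _ => (0:ℝ))
        (bound := fun ω => |Y (t+1) ω|)
        (fun c => ((((hY.stronglyMeasurable (t+1)).mono (ℱ.le _)).measurable.sub
          measurable_const).max measurable_const).aestronglyMeasurable)
        ((hY.integrable (t+1)).abs)
        (fun c => Eventually.of_forall fun ω => by
          rw [Real.norm_eq_abs, abs_of_nonneg (le_max_right _ _)]
          refine max_le (le_trans (by simp [sub_le_self_iff]) (le_abs_self _)) (abs_nonneg _))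
        (Eventually.of_forall fun ω => by
          have hev : ∀ᶠ (c:ℕ) in atTop, max (Y (t+1) ω - (c:ℝ)) 0 = 0 := by
            filter_upwards [tendsto_natCast_atTop_atTop.eventually_ge_atTop (Y (t+1) ω)]
              with c hc
            exact max_eq_right (by linarith)
          exact tendsto_const_nhds.congr' (hev.mono fun c h => h.symm))
    simpa using h
  obtain ⟨c, hc⟩ : ∃ c : ℕ, ∫ ω, max (Y (t+1) ω - (c:ℝ)) 0 ∂μ ≤ ε := by
    obtain ⟨c, hc⟩ := (htr.eventually (gt_mem_nhds hε)).exists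
    exact ⟨c, hc.le⟩
  set W : NNReal → Ω → ℝ := fun s ω => max (Y s ω - (c:ℝ)) 0 with hW_def
  have hW_apply : ∀ s ω, W s ω = max (Y s ω - (c:ℝ)) 0 := fun s ω => rfl
  have hWsub : Submartingale W ℱ μ := by
    have h := (hY.sub_martingale (martingale_const ℱ μ (c:ℝ))).sup
      ((martingale_zero (E := ℝ) ℱ μ).submartingale)
    have heq : ((Y - fun _ _ => (c:ℝ)) ⊔ (0 : NNReal → Ω → ℝ)) = W := by
      funext s ω
      simp [hW_def, Pi.sup_apply, Pi.sub_apply]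
    rwa [heq] at h
  have hstep2 : ∀ k, ∫ ω, max (sv k ω - (c:ℝ)) 0 ∂μ ≤ ε := by
    intro k
    have h1 : (fun ω => max (sv k ω - (c:ℝ)) 0)
        = stoppedValue (fun j => W (e k j)) (fun ω => ((d k ω : ℕ) : WithTop ℕ)) := rfl
    have h2 := (hpull hWsub k).expected_stoppedValue_mono (hd_stop k)
      (isStoppingTime_const (𝒢 k) (N k)) (fun ω => WithTop.coe_le_coe.2 (hd_bdd k ω)) (N := N k)
      (fun ω => le_refl _)
    have h3 : stoppedValue (fun j => W (e k j)) (fun _ : Ω => ((N k : ℕ) : WithTop ℕ)) = W (e k (N k)) := rfl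
    have h4 : ∫ ω, W (e k (N k)) ω ∂μ ≤ ∫ ω, W (t+1) ω ∂μ := by
      have h5 := hWsub.setIntegral_le (heN k) (MeasurableSet.univ)
      simpa [setIntegral_univ] using h5
    rw [h1]
    replace h2 := h2.trans (le_of_eq (congrArg (fun g => ∫ ω, g ω ∂μ) h3))
    refine le_trans (le_trans h2 h4) ?_
    simpa [hW_apply] using hc
  have hmin_int : ∀ k, Integrable (fun ω => min (sv k ω) (c:ℝ)) μ := by
    intro k
    have h := (hsv_int k).inf (integrable_const (c:ℝ))
    exact h
  have hpos_int : ∀ k, Integrable (fun ω => max (sv k ω - (c:ℝ)) 0) μ := by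
    intro k
    have h := ((hsv_int k).sub (integrable_const (c:ℝ))).pos_part
    simpa [Pi.sub_apply] using h
  have hdecomp : ∀ (a : ℝ), a = min a (c:ℝ) + max (a - c) 0 := by
    intro a
    rcases le_total a (c:ℝ) with h | h
    · rw [min_eq_left h, max_eq_right (by linarith), add_zero]
    · rw [min_eq_right h, max_eq_left (by linarith)]; ring
  have hkey : ∀ k, ∫ ω, Y 0 ω ∂μ ≤ ∫ ω, min (sv k ω) (c:ℝ) ∂μ + ε := by
    intro k
    have hsplit : ∫ ω, sv k ω ∂μ
        = ∫ ω, min (sv k ω) (c:ℝ) ∂μ + ∫ ω, max (sv k ω - (c:ℝ)) 0 ∂μ := by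
      rw [← integral_add (hmin_int k) (hpos_int k)]
      exact integral_congr_ae (Eventually.of_forall fun ω => hdecomp (sv k ω))
    have := hstep1 k
    rw [hsplit] at this
    linarith [hstep2 k]
  have hminlec : ∀ k, ∫ ω, min (sv k ω) (c:ℝ) ∂μ ≤ (c:ℝ) := by
    intro k
    have h := integral_mono (hmin_int k) (integrable_const (c:ℝ))
      (fun ω => min_le_right _ _)
    simpa [measure_univ] using h
  set L := stoppedValue Y (fun ω => (ρ ω : WithTop NNReal)) with hL_def
  have hminL_int : Integrable (fun ω => min (L ω) (c:ℝ)) μ := by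
    have h := hint.inf (integrable_const (c:ℝ))
    exact h
  set B : ℝ := (c:ℝ) - ∫ ω, Y 0 ω ∂μ + ε with hB_def
  have hB0 : 0 ≤ B := by
    have h1 := hkey 0
    have h2 := hminlec 0
    rw [hB_def]
    linarith
  have hfatou : ∫ ω, ((c:ℝ) - min (L ω) (c:ℝ)) ∂μ ≤ B := by
    have h1 : ∀ k, ∫ ω, ((c:ℝ) - min (sv k ω) (c:ℝ)) ∂μ ≤ B := by
      intro k
      rw [integral_sub (integrable_const _) (hmin_int k)]
      have h2 := hkey k
      simp only [integral_const, measure_univ, probReal_univ, ENNReal.toReal_one, one_smul, smul_eq_mul]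
      rw [hB_def]
      linarith
    have hconv : ∀ ω, Tendsto (fun k => (c:ℝ) - min (sv k ω) (c:ℝ)) atTop
        (𝓝 ((c:ℝ) - min (L ω) (c:ℝ))) := fun ω =>
      tendsto_const_nhds.sub ((hsv_conv ω).min tendsto_const_nhds)
    have hnnk : ∀ k (ω : Ω), 0 ≤ (c:ℝ) - min (sv k ω) (c:ℝ) := fun k ω =>
      sub_nonneg.2 (min_le_right _ _)
    have hnnL : ∀ ω : Ω, 0 ≤ (c:ℝ) - min (L ω) (c:ℝ) := fun ω =>
      sub_nonneg.2 (min_le_right _ _)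
    have hu_int : Integrable (fun ω => (c:ℝ) - min (L ω) (c:ℝ)) μ :=
      (integrable_const _).sub hminL_int
    have huk_int : ∀ k, Integrable (fun ω => (c:ℝ) - min (sv k ω) (c:ℝ)) μ := fun k =>
      (integrable_const _).sub (hmin_int k)
    have hmeask : ∀ k, Measurable fun ω => ENNReal.ofReal ((c:ℝ) - min (sv k ω) (c:ℝ)) :=
      fun k => (measurable_const.sub
        ((hsv_meas k).measurable.min measurable_const)).ennreal_ofReal
    have e1 : ENNReal.ofReal (∫ ω, ((c:ℝ) - min (L ω) (c:ℝ)) ∂μ)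
        = ∫⁻ ω, ENNReal.ofReal ((c:ℝ) - min (L ω) (c:ℝ)) ∂μ :=
      ofReal_integral_eq_lintegral_ofReal hu_int (Eventually.of_forall hnnL)
    have e2 : ∀ k, ENNReal.ofReal (∫ ω, ((c:ℝ) - min (sv k ω) (c:ℝ)) ∂μ)
        = ∫⁻ ω, ENNReal.ofReal ((c:ℝ) - min (sv k ω) (c:ℝ)) ∂μ := fun k =>
      ofReal_integral_eq_lintegral_ofReal (huk_int k) (Eventually.of_forall (hnnk k))
    have h3 : (∫⁻ ω, ENNReal.ofReal ((c:ℝ) - min (L ω) (c:ℝ)) ∂μ) ≤ ENNReal.ofReal B := by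
      calc ∫⁻ ω, ENNReal.ofReal ((c:ℝ) - min (L ω) (c:ℝ)) ∂μ
          = ∫⁻ ω, liminf (fun k => ENNReal.ofReal ((c:ℝ) - min (sv k ω) (c:ℝ))) atTop ∂μ :=
            lintegral_congr fun ω =>
              (((ENNReal.continuous_ofReal.tendsto _).comp (hconv ω)).liminf_eq).symm
        _ ≤ liminf (fun k => ∫⁻ ω, ENNReal.ofReal ((c:ℝ) - min (sv k ω) (c:ℝ)) ∂μ) atTop :=
            lintegral_liminf_le hmeask
        _ ≤ liminf (fun _ : ℕ => ENNReal.ofReal B) atTop :=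
            liminf_le_liminf (Eventually.of_forall fun k => by
              rw [← e2 k]; exact ENNReal.ofReal_le_ofReal (h1 k))
        _ = ENNReal.ofReal B := liminf_const _
    rw [← e1] at h3
    exact (ENNReal.ofReal_le_ofReal_iff hB0).1 h3
  have h6 : ∫ ω, ((c:ℝ) - min (L ω) (c:ℝ)) ∂μ
      = (c:ℝ) - ∫ ω, min (L ω) (c:ℝ) ∂μ := by
    rw [integral_sub (integrable_const _) hminL_int]
    simp [measure_univ]
  have h5 : ∫ ω, min (L ω) (c:ℝ) ∂μ ≤ ∫ ω, L ω ∂μ :=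
    integral_mono hminL_int hint (fun ω => min_le_left _ _)
  rw [h6, hB_def] at hfatou
  linarith
end StmtAux

theorem stmt_13 {M : Type*} [MetricSpace M] [ProperSpace M]
    [MeasurableSpace M] [BorelSpace M]
    {Ω : Type*} {m0 : MeasurableSpace Ω}
    (ℱ : Filtration NNReal m0)
    (P : M → Measure Ω) (hP : ∀ x, IsProbabilityMeasure (P x))
    (X : NNReal → Ω → M)
    (hXmeas : ∀ t, Measurable (X t))
    (hcont : ∀ ω, Continuous fun t => X t ω)
    (hstart : ∀ x : M, ∀ᵐ ω ∂P x, X 0 ω = x)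
    (f : M → ℝ) (hf : Continuous f)
    -- {f(X_t^x)} is a local submartingale for every starting point x:
    (hlocmart : ∀ x : M, ∃ σ : ℕ → Ω → NNReal,
      (∀ n, IsStoppingTime ℱ (fun ω => (σ n ω : WithTop NNReal))) ∧ (∀ ω, Monotone fun n => σ n ω) ∧
      (∀ ω, Tendsto (fun n => σ n ω) atTop atTop) ∧
      ∀ n, Submartingale
        (MeasureTheory.stoppedProcess (fun t ω => f (X t ω))
          (fun ω => (σ n ω : WithTop NNReal))) ℱ (P x))
    (x : M) (t : NNReal) (p : ℝ) (hp : 1 < p)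
    (τ : ℕ → Ω → NNReal)
    -- τ n is the first exit time from the closed ball B(x,n):
    (hτdef : ∀ (n : ℕ) (ω : Ω), τ n ω = sInf {s : NNReal | (n : ℝ) < dist x (X s ω)})
    (hτstop : ∀ n, IsStoppingTime ℱ (fun ω => (τ n ω : WithTop NNReal)))
    -- stochastic completeness:
    (hsc : Tendsto (fun n : ℕ => (P x) {ω | τ n ω ≤ t}) atTop (nhds 0))
    (hfp : ∫⁻ y, ENNReal.ofReal (|f y| ^ p) ∂((P x).map (X t)) < ⊤)
    (C : ℝ)
    (hbdd : ∀ n : ℕ, 0 < n →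
      (⨆ y ∈ Metric.closedBall x n, |f y|) *
        ((P x) {ω | τ n ω ≤ t}).toReal ^ (1 / p) < C) :
    f x ≤ ∫ ω, f (X t ω) ∂(P x) := by
  classical
  haveI : IsProbabilityMeasure (P x) := hP x
  obtain ⟨σ, hσstop, hσmono, hσtend, hσsub⟩ := hlocmart x
  set μ : Measure Ω := P x with hμ_def
  set Y : ℕ → NNReal → Ω → ℝ :=
    fun n => MeasureTheory.stoppedProcess (fun s ω => f (X s ω))
      (fun ω => (σ n ω : WithTop NNReal)) with hY_def
  have hYc : ∀ n ω, Continuous fun s => Y n s ω := by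
    intro n ω
    have h : (fun s => Y n s ω) = fun s => f (X (min s (σ n ω)) ω) := rfl
    rw [h]
    exact hf.comp ((hcont ω).comp (continuous_id.min continuous_const))
  -- sup of |f| on closed balls
  have hK_le : ∀ (m : ℕ), ∀ y ∈ Metric.closedBall x (m:ℝ),
      |f y| ≤ ⨆ y ∈ Metric.closedBall x (m:ℝ), |f y| := by
    intro m
    have hxmem : x ∈ Metric.closedBall x (m:ℝ) := Metric.mem_closedBall_self (by positivity)
    obtain ⟨z, hz, hzge⟩ := (isCompact_closedBall x (m:ℝ)).exists_isMaxOn ⟨x, hxmem⟩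
      ((continuous_abs.comp hf).continuousOn)
    have hbdd' : ∀ y : M, (⨆ _ : y ∈ Metric.closedBall x (m:ℝ), |f y|) ≤ max (|f z|) 0 := by
      intro y
      by_cases hy : y ∈ Metric.closedBall x (m:ℝ)
      · rw [ciSup_pos hy]; exact le_max_of_le_left (hzge hy)
      · simp [hy, Real.iSup_of_isEmpty]
    intro y hy
    have h4 : (⨆ _ : y ∈ Metric.closedBall x (m:ℝ), |f y|) = |f y| := ciSup_pos hy
    rw [← h4]
    exact le_ciSup ⟨max (|f z|) 0, by rintro v ⟨y', rfl⟩; exact hbdd' y'⟩ y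
  set K : ℕ → ℝ := fun m => ⨆ y ∈ Metric.closedBall x (m:ℝ), |f y| with hK_def
  have hK0 : ∀ m : ℕ, 0 ≤ K m := fun m =>
    (abs_nonneg (f x)).trans (hK_le m x (Metric.mem_closedBall_self (by positivity)))
  -- pathwise fact: up to time τ m the process stays in the closed ball of radius m
  have hP1 : ∀ᵐ ω ∂μ, ∀ (m : ℕ) (u : NNReal), u ≤ τ m ω → dist (X u ω) x ≤ (m:ℝ) := by
    filter_upwards [hstart x] with ω hω0
    intro m u hu
    rw [dist_comm]
    by_contra hcon
    push_neg at hcon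
    have hu_mem : u ∈ {s : NNReal | (m:ℝ) < dist x (X s ω)} := hcon
    have hτ_le_u : τ m ω ≤ u := by
      rw [hτdef m ω]; exact csInf_le (OrderBot.bddBelow _) hu_mem
    have hequ : τ m ω = u := le_antisymm hτ_le_u hu
    rcases eq_or_ne u 0 with h0 | h0
    · rw [h0, hω0, dist_self] at hcon
      exact absurd hcon (by positivity : (0:ℝ) ≤ (m:ℝ)).not_gt
    · have hupos : 0 < u := pos_iff_ne_zero.2 h0
      have hD : IsClosed {s : NNReal | dist x (X s ω) ≤ (m:ℝ)} :=
        isClosed_le (continuous_const.dist (hcont ω)) continuous_const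
      have hIio : Set.Iio u ⊆ {s : NNReal | dist x (X s ω) ≤ (m:ℝ)} := by
        intro s hs
        have hs' : s < sInf {s : NNReal | (m:ℝ) < dist x (X s ω)} := by
          rw [← hτdef m ω, hequ]; exact hs
        have h2 := notMem_of_lt_csInf hs' (OrderBot.bddBelow _)
        simpa using h2
      have humem : u ∈ closure (Set.Iio u) := by
        rw [closure_Iio' (α := NNReal) ⟨0, hupos⟩]; exact self_mem_Iic
      have h3 : u ∈ {s : NNReal | dist x (X s ω) ≤ (m:ℝ)} :=
        hD.closure_eq ▸ (closure_mono hIio) humem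
      exact absurd hcon (not_lt.2 h3)
  -- integrability of f (X t)
  have hfXt_meas : Measurable fun ω => f (X t ω) := hf.measurable.comp (hXmeas t)
  have hInt : Integrable (fun ω => f (X t ω)) μ := by
    refine ⟨hfXt_meas.aestronglyMeasurable, ?_⟩
    have habs : ∀ a : ℝ, ENNReal.ofReal |a| ≤ 1 + ENNReal.ofReal (|a| ^ p) := by
      intro a
      have h1 : |a| ≤ 1 + |a| ^ p := by
        rcases le_total (|a|) 1 with h | h
        · have := Real.rpow_nonneg (abs_nonneg a) p
          linarith
        · have h3 : |a| ≤ |a| ^ p := by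
            nth_rewrite 1 [← Real.rpow_one (|a|)]
            exact Real.rpow_le_rpow_of_exponent_le h hp.le
          linarith
      calc ENNReal.ofReal |a| ≤ ENNReal.ofReal (1 + |a| ^ p) := ENNReal.ofReal_le_ofReal h1
        _ = 1 + ENNReal.ofReal (|a| ^ p) := by
          rw [ENNReal.ofReal_add zero_le_one (Real.rpow_nonneg (abs_nonneg a) p)]
          simp
    have hg_meas : Measurable fun y => ENNReal.ofReal (|f y| ^ p) :=
      (hf.measurable.abs.pow_const p).ennreal_ofReal
    have hmap : ∫⁻ ω, ENNReal.ofReal (|f (X t ω)| ^ p) ∂μ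
        = ∫⁻ y, ENNReal.ofReal (|f y| ^ p) ∂(μ.map (X t)) :=
      (lintegral_map hg_meas (hXmeas t)).symm
    have hfin : ∫⁻ ω, ENNReal.ofReal (|f (X t ω)| ^ p) ∂μ < ⊤ := by
      rw [hmap]; exact hfp
    rw [hasFiniteIntegral_iff_norm]
    calc ∫⁻ ω, ENNReal.ofReal ‖f (X t ω)‖ ∂μ
        ≤ ∫⁻ ω, (1 + ENNReal.ofReal (|f (X t ω)| ^ p)) ∂μ := by
          refine lintegral_mono fun ω => ?_
          rw [Real.norm_eq_abs]; exact habs _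
      _ = μ Set.univ + ∫⁻ ω, ENNReal.ofReal (|f (X t ω)| ^ p) ∂μ := by
          rw [lintegral_add_left measurable_const]
          simp
      _ < ⊤ := by
          rw [measure_univ]
          exact ENNReal.add_lt_top.2 ⟨ENNReal.one_lt_top, hfin⟩
  -- main step: for every m, f x ≤ ∫ f (X_{min (τ m) t}) and integrability
  have hmain : ∀ m : ℕ, (f x ≤ ∫ ω, f (X (min (τ m ω) t) ω) ∂μ)
      ∧ Integrable (fun ω => f (X (min (τ m ω) t) ω)) μ := by
    intro m
    set ρm : Ω → NNReal := fun ω => min (τ m ω) t with hρm_def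
    have hρm : IsStoppingTime ℱ (fun ω => (ρm ω : WithTop NNReal)) := (hτstop m).min_const t
    have hρmt : ∀ ω, ρm ω ≤ t := fun ω => min_le_right _ _
    have hsvSM : ∀ n, StronglyMeasurable (stoppedValue (Y n) (fun ω => (ρm ω : WithTop NNReal))) := fun n =>
      (stronglyMeasurable_stoppedValue_of_le
        ((hσsub n).1.progMeasurable_of_continuous (hYc n)) hρm
          (fun ω => WithTop.coe_le_coe.2 (hρmt ω))).mono (ℱ.le t)
    have hdom : ∀ᵐ ω ∂μ, ∀ n : ℕ, |stoppedValue (Y n) (fun ω => (ρm ω : WithTop NNReal)) ω| ≤ K m := by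
      filter_upwards [hP1] with ω h1
      intro n
      have heq : stoppedValue (Y n) (fun ω => (ρm ω : WithTop NNReal)) ω = f (X (min (ρm ω) (σ n ω)) ω) := rfl
      rw [heq]
      refine hK_le m _ ?_
      rw [Metric.mem_closedBall]
      exact h1 m _ ((min_le_left _ _).trans (min_le_left _ _))
    have hsvInt : ∀ n, Integrable (stoppedValue (Y n) (fun ω => (ρm ω : WithTop NNReal))) μ := fun n =>
      Integrable.mono' (integrable_const (K m)) (hsvSM n).aestronglyMeasurable
        (hdom.mono fun ω h => by rw [Real.norm_eq_abs]; exact h n)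
    have hY0 : ∀ n, ∫ ω, Y n 0 ω ∂μ = f x := by
      intro n
      have hae : ∀ᵐ ω ∂μ, Y n 0 ω = f x := by
        filter_upwards [hstart x] with ω hω
        show f (X (WithTop.untopA (min ((0 : NNReal) : WithTop NNReal) (σ n ω : WithTop NNReal))) ω) = f x
        rw [← WithTop.coe_min, min_eq_left zero_le]; exact congrArg f hω
      rw [integral_congr_ae hae]
      simp [measure_univ]
    have hos : ∀ n, f x ≤ ∫ ω, stoppedValue (Y n) (fun ω => (ρm ω : WithTop NNReal)) ω ∂μ := by
      intro n
      have h := StmtAux.os_cont ℱ μ (hσsub n) (hYc n) hρm hρmt (hsvInt n)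
      rwa [hY0 n] at h
    have hGconv : ∀ ω : Ω, Tendsto (fun n => stoppedValue (Y n) (fun ω => (ρm ω : WithTop NNReal)) ω) atTop
        (𝓝 (f (X (min (τ m ω) t) ω))) := by
      intro ω
      have hev : ∀ᶠ n in atTop, stoppedValue (Y n) (fun ω => (ρm ω : WithTop NNReal)) ω = f (X (min (τ m ω) t) ω) := by
        filter_upwards [(hσtend ω).eventually_ge_atTop (ρm ω)] with n hn
        show f (X (min (ρm ω) (σ n ω)) ω) = _
        rw [min_eq_left hn]
      exact tendsto_const_nhds.congr' (hev.mono fun n h => h.symm)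
    have hDCT := tendsto_integral_of_dominated_convergence (μ := μ)
      (F := fun n => stoppedValue (Y n) (fun ω => (ρm ω : WithTop NNReal))) (f := fun ω => f (X (min (τ m ω) t) ω))
      (fun _ => K m)
      (fun n => (hsvSM n).aestronglyMeasurable)
      (integrable_const (K m))
      (fun n => hdom.mono fun ω h => by rw [Real.norm_eq_abs]; exact h n)
      (Eventually.of_forall hGconv)
    constructor
    · exact ge_of_tendsto hDCT (Eventually.of_forall hos)
    · refine ⟨aestronglyMeasurable_of_tendsto_ae atTop
        (fun n => (hsvSM n).aestronglyMeasurable) (Eventually.of_forall hGconv), ?_⟩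
      exact hasFiniteIntegral_of_dominated_convergence
        (integrable_const (K m)).hasFiniteIntegral
        (fun n => hdom.mono fun ω h => by rw [Real.norm_eq_abs]; exact h n)
        (Eventually.of_forall hGconv)
  -- bound on the limit function
  have hGbound : ∀ m : ℕ, ∀ᵐ ω ∂μ, |f (X (min (τ m ω) t) ω)| ≤ K m := by
    intro m
    filter_upwards [hP1] with ω h1
    refine hK_le m _ ?_
    rw [Metric.mem_closedBall]
    exact h1 m _ (min_le_left _ _)
  -- splitting of the integral
  have hAm_meas : ∀ m : ℕ, MeasurableSet {ω | τ m ω ≤ t}ᶜ := fun m => by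
    simpa only [WithTop.coe_le_coe] using (ℱ.le t _ ((hτstop m).measurableSet_le t)).compl
  have hsplit : ∀ m : ℕ, ∫ ω, f (X (min (τ m ω) t) ω) ∂μ =
      ∫ ω, ({ω' | τ m ω' ≤ t}ᶜ).indicator (fun ω' => f (X t ω')) ω ∂μ
        + ∫ ω in {ω' | τ m ω' ≤ t}, f (X (min (τ m ω) t) ω) ∂μ := by
    intro m
    have h1 : ∫ ω in {ω' | τ m ω' ≤ t}ᶜ, f (X (min (τ m ω) t) ω) ∂μ
        + ∫ ω in ({ω' | τ m ω' ≤ t}ᶜ)ᶜ, f (X (min (τ m ω) t) ω) ∂μ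
        = ∫ ω, f (X (min (τ m ω) t) ω) ∂μ :=
      integral_add_compl (hAm_meas m) (hmain m).2
    have h2 : ∫ ω in {ω' | τ m ω' ≤ t}ᶜ, f (X (min (τ m ω) t) ω) ∂μ
        = ∫ ω in {ω' | τ m ω' ≤ t}ᶜ, f (X t ω) ∂μ := by
      refine setIntegral_congr_fun (hAm_meas m) ?_
      intro ω hω
      have hlt : t < τ m ω := not_le.1 hω
      show f (X (min (τ m ω) t) ω) = f (X t ω)
      rw [min_eq_right hlt.le]
    rw [← h1, h2, integral_indicator (hAm_meas m), compl_compl]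
  -- the escaping-probability term tends to 0
  have hPm_tend : Tendsto (fun m : ℕ => (μ {ω | τ m ω ≤ t}).toReal) atTop (𝓝 0) := by
    have h := (ENNReal.tendsto_toReal (by simp : (0:ENNReal) ≠ ⊤)).comp hsc
    rw [ENNReal.toReal_zero] at h
    exact h
  have hq : 0 < 1 - 1/p := by
    have h1 : 1/p < 1 := by
      rw [div_lt_one (by linarith)]; linarith
    linarith
  have hT2bound : ∀ m : ℕ, 0 < m →
      ‖∫ ω in {ω' | τ m ω' ≤ t}, f (X (min (τ m ω) t) ω) ∂μ‖
        ≤ max C 0 * (μ {ω | τ m ω ≤ t}).toReal ^ (1 - 1/p) := by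
    intro m hm
    have hb1 : ‖∫ ω in {ω' | τ m ω' ≤ t}, f (X (min (τ m ω) t) ω) ∂μ‖
        ≤ K m * (μ {ω | τ m ω ≤ t}).toReal := by
      refine norm_setIntegral_le_of_norm_le_const_ae' (measure_lt_top μ _) ?_
      filter_upwards [hGbound m] with ω h _
      rw [Real.norm_eq_abs]; exact h
    refine hb1.trans ?_
    set Pm : ℝ := (μ {ω | τ m ω ≤ t}).toReal with hPm_def
    have hPm0 : 0 ≤ Pm := ENNReal.toReal_nonneg
    rcases hPm0.eq_or_lt with h0 | h0
    · rw [← h0, mul_zero, Real.zero_rpow hq.ne', mul_zero]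
    · have hsum : Pm ^ (1/p) * Pm ^ (1 - 1/p) = Pm := by
        rw [← Real.rpow_add h0]
        norm_num
      have hb2 : K m * Pm ^ (1/p) ≤ C := (hbdd m hm).le
      calc K m * Pm = (K m * Pm ^ (1/p)) * Pm ^ (1 - 1/p) := by rw [mul_assoc, hsum]
        _ ≤ C * Pm ^ (1 - 1/p) :=
          mul_le_mul_of_nonneg_right hb2 (Real.rpow_nonneg hPm0 _)
        _ ≤ max C 0 * Pm ^ (1 - 1/p) :=
          mul_le_mul_of_nonneg_right (le_max_left _ _) (Real.rpow_nonneg hPm0 _)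
  have hT2tend : Tendsto (fun m : ℕ => ∫ ω in {ω' | τ m ω' ≤ t}, f (X (min (τ m ω) t) ω) ∂μ)
      atTop (𝓝 0) := by
    refine squeeze_zero_norm'
      (a := fun m : ℕ => max C 0 * (μ {ω | τ m ω ≤ t}).toReal ^ (1 - 1/p)) ?_ ?_
    · filter_upwards [eventually_ge_atTop 1] with m hm
      exact hT2bound m hm
    · have h1 : Tendsto (fun m : ℕ => (μ {ω | τ m ω ≤ t}).toReal ^ (1 - 1/p)) atTop (𝓝 0) := by
        have hcont' : ContinuousAt (fun z : ℝ => z ^ (1 - 1/p)) 0 :=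
          Real.continuousAt_rpow_const 0 _ (Or.inr hq.le)
        have h2 := hcont'.tendsto.comp hPm_tend
        have h3 : ((fun z : ℝ => z ^ (1 - 1/p)) ∘ fun m : ℕ => (μ {ω | τ m ω ≤ t}).toReal)
            = fun m : ℕ => (μ {ω | τ m ω ≤ t}).toReal ^ (1 - 1/p) := rfl
        rw [h3, Real.zero_rpow hq.ne'] at h2
        exact h2
      simpa using h1.const_mul (max C 0)
  -- the indicator term tends to ∫ f (X t)
  have hJm_null : ∀ m : ℕ, μ {ω | ∀ s : NNReal, dist x (X s ω) ≤ (m:ℝ)} = 0 := by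
    intro m
    have hev : ∀ᶠ m' : ℕ in atTop,
        μ {ω | ∀ s : NNReal, dist x (X s ω) ≤ (m:ℝ)} ≤ μ {ω | τ m' ω ≤ t} := by
      filter_upwards [eventually_ge_atTop m] with m' hmm'
      refine measure_mono ?_
      intro ω hω
      have hS : {s : NNReal | (m':ℝ) < dist x (X s ω)} = ∅ := by
        ext s
        simp only [Set.mem_setOf_eq, Set.mem_empty_iff_false, iff_false, not_lt]
        exact (hω s).trans (Nat.cast_le.2 hmm')
      show τ m' ω ≤ t
      rw [hτdef m' ω, hS]
      simp
    have h0 := ge_of_tendsto hsc hev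
    exact le_antisymm h0 (by positivity)
  have hJ : ∀ᵐ ω ∂μ, ∀ m : ℕ, ∃ s : NNReal, (m:ℝ) < dist x (X s ω) := by
    rw [ae_iff]
    refine measure_mono_null ?_
      (measure_iUnion_null (fun m : ℕ => hJm_null m))
    intro ω hω
    simp only [Set.mem_setOf_eq, not_forall, not_exists, not_lt] at hω
    obtain ⟨m, hm⟩ := hω
    exact Set.mem_iUnion.2 ⟨m, hm⟩
  have hT1tend : Tendsto
      (fun m : ℕ => ∫ ω, ({ω' | τ m ω' ≤ t}ᶜ).indicator (fun ω' => f (X t ω')) ω ∂μ)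
      atTop (𝓝 (∫ ω, f (X t ω) ∂μ)) := by
    refine tendsto_integral_of_dominated_convergence (fun ω => |f (X t ω)|)
      (fun m => hfXt_meas.aestronglyMeasurable.indicator (hAm_meas m))
      hInt.abs ?_ ?_
    · intro m
      refine Eventually.of_forall fun ω => ?_
      by_cases hω : ω ∈ {ω' | τ m ω' ≤ t}ᶜ
      · rw [Set.indicator_of_mem hω, Real.norm_eq_abs]
      · rw [Set.indicator_of_notMem hω]
        simp [abs_nonneg]
    · filter_upwards [hJ] with ω hω
      have hconts : Continuous fun s : NNReal => dist x (X s ω) :=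
        continuous_const.dist (hcont ω)
      obtain ⟨z, hz, hzge⟩ := (isCompact_Icc :
          IsCompact (Set.Icc (0:NNReal) (t+1))).exists_isMaxOn
        ⟨0, ⟨le_refl _, zero_le⟩⟩ hconts.continuousOn
      obtain ⟨m0, hm0⟩ := exists_nat_ge (dist x (X z ω))
      have hev : ∀ᶠ m : ℕ in atTop,
          ({ω' | τ m ω' ≤ t}ᶜ).indicator (fun ω' => f (X t ω')) ω = f (X t ω) := by
        filter_upwards [eventually_ge_atTop m0] with m hm
        have hmem : ω ∈ {ω' | τ m ω' ≤ t}ᶜ := by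
          simp only [Set.mem_compl_iff, Set.mem_setOf_eq, not_le]
          rw [hτdef m ω]
          refine lt_of_lt_of_le (lt_add_of_pos_right t one_pos) ?_
          obtain ⟨s0, hs0⟩ := hω m
          refine le_csInf ⟨s0, hs0⟩ ?_
          intro s hs
          by_contra hcon
          push_neg at hcon
          have hmem' : s ∈ Set.Icc (0:NNReal) (t+1) := ⟨zero_le, hcon.le⟩
          have h1 : dist x (X s ω) ≤ dist x (X z ω) := hzge hmem'
          have h2 : (m:ℝ) < dist x (X s ω) := hs
          have h3 : (m0:ℝ) ≤ (m:ℝ) := Nat.cast_le.2 hm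
          linarith
        rw [Set.indicator_of_mem hmem]
      exact tendsto_const_nhds.congr' (hev.mono fun m h => h.symm)
  -- conclusion
  have hle : ∀ m : ℕ, f x ≤
      ∫ ω, ({ω' | τ m ω' ≤ t}ᶜ).indicator (fun ω' => f (X t ω')) ω ∂μ
        + ∫ ω in {ω' | τ m ω' ≤ t}, f (X (min (τ m ω) t) ω) ∂μ := fun m =>
    le_trans (hmain m).1 (le_of_eq (hsplit m))
  have hfinal := ge_of_tendsto (hT1tend.add hT2tend) (Eventually.of_forall hle)
  simpa using hfinal
end

section
/- Let $M$ be a complete Riemannian manifold with heat kernel $\mu_t(x,y)$ for the operator $\Delta/2$, satisfying a Gaussian upper bound $\mu_{T+\epsilon}(o,y) \le C\, e^{c(d(o,y))}\exp\big(-\tfrac{2 d(o,y)^2}{(4+\delta)(T+\epsilon)}\big)$ and a Gaussian lower bound $\mu_T(o,y) \ge \tilde{C}\, e^{-\tilde{c}(d(o,y))}\exp\big(-\tfrac{d(o,y)^2}{2T}\big)$, where $c, \tilde{c}$ grow at most linearly, and suppose $\int_M \mu_T(o,y)^{1/2}\,V(dy) < \infty$. If $f \in L^p(M,\mu_T^o)$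 for some $1<p<\infty$ and $1 < r < p$, then there exists $\epsilon>0$ such that $f \in L^r(M,\mu_{T+\epsilon}^o)$. -/
open MeasureTheory
open scoped ENNReal NNReal

private lemma aux_core (a b d : ℝ) (hb : 0 < b) : a * d - b * d ^ 2 ≤ a ^ 2 / (4 * b) := by
  rw [le_div_iff₀ (by linarith : (0:ℝ) < 4 * b)]
  nlinarith [sq_nonneg (2 * b * d - a)]

theorem stmt_18 {M : Type*} [MetricSpace M] [MeasurableSpace M] [BorelSpace M]
    (V : Measure M)
    (μ : ℝ → M → M → ℝ) (o : M) (T : ℝ) (hT : 0 < T)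
    (hmeas : ∀ t x, Measurable (μ t x))
    (hnonneg : ∀ t x y, 0 ≤ μ t x y)
    -- Gaussian upper bound for the kernels at times T + ε, with a prefactor
    -- growing at most exponentially in the distance:
    (hupper : ∀ ε : ℝ, 0 < ε → ∀ δ : ℝ, 0 < δ → δ < 1 →
      ∃ C c : ℝ, 0 < C ∧ 0 ≤ c ∧ ∀ y : M,
        μ (T + ε) o y ≤ C * Real.exp (c * dist o y) *
          Real.exp (-(2 * dist o y ^ 2) / ((4 + δ) * (T + ε))))
    -- Gaussian lower bound at time T, with a prefactor decaying at most
    -- exponentially in the distance: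
    (hlower : ∃ C' c' : ℝ, 0 < C' ∧ 0 ≤ c' ∧ ∀ y : M,
      C' * Real.exp (-(c' * dist o y)) * Real.exp (-(dist o y ^ 2) / (2 * T)) ≤ μ T o y)
    (hint : ∫⁻ y, ENNReal.ofReal (Real.sqrt (μ T o y)) ∂V < ⊤)
    (p r : ℝ) (hp : 1 < p) (hr : 1 < r) (hrp : r < p)
    (f : M → ℝ)
    (hf : MemLp f (ENNReal.ofReal p) (V.withDensity (fun y => ENNReal.ofReal (μ T o y)))) :
    ∃ ε : ℝ, 0 < ε ∧
      MemLp f (ENNReal.ofReal r)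
        (V.withDensity (fun y => ENNReal.ofReal (μ (T + ε) o y))) := by
  obtain ⟨C', c', hC', hc', hlow⟩ := hlower
  have hr0 : (0:ℝ) < r := lt_trans one_pos hr
  have hp0 : (0:ℝ) < p := lt_trans one_pos hp
  set s : ℝ := p / r with hs_def
  have hs : 1 < s := (one_lt_div hr0).2 hrp
  set q : ℝ := s / (s - 1) with hq_def
  have hconj : s.HolderConjugate q :=
    (Real.holderConjugate_iff_eq_conjExponent hs).2 rfl
  clear_value s q
  have hq1 : 1 < q := hconj.symm.lt
  have hq0 : (0:ℝ) < q := lt_trans one_pos hq1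
  have hqh : (0:ℝ) < q - 1/2 := by linarith
  have hs0 : s ≠ 0 := ne_of_gt hconj.pos
  have hs1 : s - 1 ≠ 0 := hconj.sub_one_ne_zero
  have hrs : r * s = p := by
    rw [hs_def]; field_simp
  have hrps : r / p * s = 1 := by
    rw [hs_def]; field_simp
  have hrpq : r / p * q = q - 1 := by
    have h1 : r / p = 1 / s := by rw [hs_def]; rw [one_div_div]
    rw [h1, hq_def]; field_simp; ring
  set θ : ℝ := q / (q - 1/2) with hθ_def
  have hθ : 1 < θ := (one_lt_div hqh).2 (by linarith)
  have hθq : (q - 1/2) * θ = q := by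
    rw [hθ_def, mul_comm, div_mul_cancel₀ _ hqh.ne']
  clear_value θ
  refine ⟨T * (θ - 1) / 2, div_pos (mul_pos hT (sub_pos.2 hθ)) two_pos, ?_⟩
  set ε : ℝ := T * (θ - 1) / 2 with hε_def
  have hε : 0 < ε := div_pos (mul_pos hT (sub_pos.2 hθ)) two_pos
  clear_value ε
  have h8 : 0 < 8 * θ / (θ + 1) - 4 := by
    rw [sub_pos, lt_div_iff₀ (by linarith)]; linarith
  set δ : ℝ := min 1 (8 * θ / (θ + 1) - 4) / 2 with hδ_def
  clear_value δ
  have hδ0 : 0 < δ := by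
    have := lt_min one_pos h8
    rw [hδ_def]; linarith
  have hδ1 : δ < 1 := by
    have := min_le_left (1:ℝ) (8 * θ / (θ + 1) - 4)
    rw [hδ_def]; linarith
  obtain ⟨C, c, hC, hc, hup⟩ := hupper ε hε δ hδ0 hδ1
  have hTε : T + ε = T * (θ + 1) / 2 := by rw [hε_def]; ring
  have hTε0 : 0 < T + ε := by linarith
  have hδlt : 4 + δ < 8 * θ / (θ + 1) := by
    have := min_le_right (1:ℝ) (8 * θ / (θ + 1) - 4)
    rw [hδ_def]; linarith
  have hD : 0 < (4 + δ) * (T + ε) := mul_pos (by linarith) hTε0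
  have hD4T : (4 + δ) * (T + ε) < 4 * T * θ := by
    have h4 : (4 + δ) * (T * (θ + 1) / 2) < (8 * θ / (θ + 1)) * (T * (θ + 1) / 2) :=
      mul_lt_mul_of_pos_right hδlt (div_pos (mul_pos hT (by linarith)) two_pos)
    have h5 : (8 * θ / (θ + 1)) * (T * (θ + 1) / 2) = 4 * T * θ := by
      field_simp
      ring
    rw [hTε]; linarith
  set b : ℝ := 2 * q / ((4 + δ) * (T + ε)) - (q - 1/2) / (2 * T) with hb_def
  clear_value b
  have hb : 0 < b := by
    rw [hb_def, sub_pos, div_lt_div_iff₀ (by linarith) hD]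
    have h6 : (q - 1/2) * ((4 + δ) * (T + ε)) < (q - 1/2) * (4 * T * θ) :=
      mul_lt_mul_of_pos_left hD4T hqh
    have h7 : (q - 1/2) * (4 * T * θ) = 2 * q * (2 * T) := by
      linear_combination (4 * T) * hθq
    linarith
  set a : ℝ := q * c + (q - 1/2) * c' with ha_def
  have ha : 0 ≤ a := add_nonneg (mul_nonneg hq0.le hc) (mul_nonneg hqh.le hc')
  clear_value a
  set K : ℝ := C ^ q / C' ^ (q - 1/2) * Real.exp (a ^ 2 / (4 * b)) with hK_def
  have hC'pow : (0:ℝ) < C' ^ (q - 1/2) := Real.rpow_pos_of_pos hC' _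
  have hCpow : (0:ℝ) < C ^ q := Real.rpow_pos_of_pos hC _
  have hK : 0 < K := mul_pos (div_pos hCpow hC'pow) (Real.exp_pos _)
  clear_value K
  -- pointwise key inequality (real version)
  have key : ∀ y : M, (μ (T + ε) o y) ^ q ≤ K * (μ T o y) ^ (q - 1/2) := by
    intro y
    set d : ℝ := dist o y with hd
    have hd0 : 0 ≤ d := dist_nonneg
    have h1 : (μ (T + ε) o y) ^ q ≤
        (C * Real.exp (c * d) * Real.exp (-(2 * d ^ 2) / ((4 + δ) * (T + ε)))) ^ q :=
      Real.rpow_le_rpow (hnonneg _ _ _) (hup y) hq0.le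
    have h2 : (C' * Real.exp (-(c' * d)) * Real.exp (-d ^ 2 / (2 * T))) ^ (q - 1/2) ≤
        (μ T o y) ^ (q - 1/2) :=
      Real.rpow_le_rpow
        (mul_nonneg (mul_nonneg hC'.le (Real.exp_pos _).le) (Real.exp_pos _).le)
        (hlow y) hqh.le
    have hcore : a * d - b * d ^ 2 ≤ a ^ 2 / (4 * b) := aux_core a b d hb
    have e1 : a * d = q * c * d + (q - 1/2) * c' * d := by rw [ha_def]; ring
    have e2 : b * d ^ 2 =
        2 * q / ((4 + δ) * (T + ε)) * d ^ 2 - (q - 1/2) / (2 * T) * d ^ 2 := by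
      rw [hb_def]; ring
    have hexp : Real.exp (c * d * q + -(2 * d ^ 2) / ((4 + δ) * (T + ε)) * q) ≤
        Real.exp (a ^ 2 / (4 * b) + (-(c' * d) * (q - 1/2) + -d ^ 2 / (2 * T) * (q - 1/2))) := by
      rw [Real.exp_le_exp]
      have : c * d * q + -(2 * d ^ 2) / ((4 + δ) * (T + ε)) * q
          = q * c * d - 2 * q / ((4 + δ) * (T + ε)) * d ^ 2 := by ring
      rw [this]
      have : -(c' * d) * (q - 1/2) + -d ^ 2 / (2 * T) * (q - 1/2)
          = -((q - 1/2) * c' * d) - (q - 1/2) / (2 * T) * d ^ 2 := by ring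
      rw [this]
      linarith [hcore, e1.symm, e2.symm]
    have h3 : (C * Real.exp (c * d) * Real.exp (-(2 * d ^ 2) / ((4 + δ) * (T + ε)))) ^ q ≤
        K * (C' * Real.exp (-(c' * d)) * Real.exp (-d ^ 2 / (2 * T))) ^ (q - 1/2) := by
      rw [Real.mul_rpow (mul_nonneg hC.le (Real.exp_pos _).le) (Real.exp_pos _).le,
          Real.mul_rpow hC.le (Real.exp_pos _).le,
          Real.mul_rpow (mul_nonneg hC'.le (Real.exp_pos _).le) (Real.exp_pos _).le,
          Real.mul_rpow hC'.le (Real.exp_pos _).le,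
          ← Real.exp_mul, ← Real.exp_mul, ← Real.exp_mul, ← Real.exp_mul, hK_def]
      calc C ^ q * Real.exp (c * d * q) * Real.exp (-(2 * d ^ 2) / ((4 + δ) * (T + ε)) * q)
          = C ^ q * Real.exp (c * d * q + -(2 * d ^ 2) / ((4 + δ) * (T + ε)) * q) := by
            rw [Real.exp_add]; ring
        _ ≤ C ^ q * Real.exp (a ^ 2 / (4 * b) +
              (-(c' * d) * (q - 1/2) + -d ^ 2 / (2 * T) * (q - 1/2))) := by
            exact mul_le_mul_of_nonneg_left hexp hCpow.le
        _ = C ^ q / C' ^ (q - 1/2) * Real.exp (a ^ 2 / (4 * b)) *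
              (C' ^ (q - 1/2) * Real.exp (-(c' * d) * (q - 1/2)) *
                Real.exp (-d ^ 2 / (2 * T) * (q - 1/2))) := by
            rw [Real.exp_add, Real.exp_add]
            field_simp
    calc (μ (T + ε) o y) ^ q
        ≤ (C * Real.exp (c * d) * Real.exp (-(2 * d ^ 2) / ((4 + δ) * (T + ε)))) ^ q := h1
      _ ≤ K * (C' * Real.exp (-(c' * d)) * Real.exp (-d ^ 2 / (2 * T))) ^ (q - 1/2) := h3
      _ ≤ K * (μ T o y) ^ (q - 1/2) := mul_le_mul_of_nonneg_left h2 hK.le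
  -- positivity of the time-T kernel
  have hm1pos : ∀ y : M, 0 < μ T o y := fun y =>
    lt_of_lt_of_le (mul_pos (mul_pos hC' (Real.exp_pos _)) (Real.exp_pos _)) (hlow y)
  -- measurability facts
  have hmeas1 : Measurable fun y => ENNReal.ofReal (μ T o y) := (hmeas T o).ennreal_ofReal
  have hmeas2 : Measurable fun y => ENNReal.ofReal (μ (T + ε) o y) :=
    (hmeas (T + ε) o).ennreal_ofReal
  have hVac : V ≪ V.withDensity (fun y => ENNReal.ofReal (μ T o y)) :=
    withDensity_absolutelyContinuous' hmeas1.aemeasurable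
      (Filter.Eventually.of_forall fun y => (ENNReal.ofReal_pos.2 (hm1pos y)).ne')
  have hfV : AEStronglyMeasurable f V := hf.1.mono_ac hVac
  have hfν2 : AEStronglyMeasurable f
      (V.withDensity (fun y => ENNReal.ofReal (μ (T + ε) o y))) :=
    hf.1.mono_ac ((withDensity_absolutelyContinuous V _).trans hVac)
  refine ⟨hfν2, ?_⟩
  have hofr0 : ENNReal.ofReal r ≠ 0 := by
    simp [ENNReal.ofReal_eq_zero, not_le, hr0]
  rw [eLpNorm_lt_top_iff_lintegral_rpow_enorm_lt_top hofr0 ENNReal.ofReal_ne_top,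
    ENNReal.toReal_ofReal hr0.le]
  -- transfer to an integral over V
  have hFmeas : AEMeasurable (fun y => (‖f y‖₊ : ℝ≥0∞) ^ r) V :=
    ENNReal.continuous_rpow_const.measurable.comp_aemeasurable hfV.enorm
  change (∫⁻ a, (‖f a‖₊ : ℝ≥0∞) ^ r ∂(V.withDensity fun y => ENNReal.ofReal (μ (T + ε) o y))) < ⊤
  rw [lintegral_withDensity_eq_lintegral_mul₀ hmeas2.aemeasurable hFmeas]
  simp only [Pi.mul_apply]
  -- Hölder setup
  set A : M → ℝ≥0∞ := fun y => (‖f y‖₊ : ℝ≥0∞) ^ r * (ENNReal.ofReal (μ T o y)) ^ (r / p)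
    with hA_def
  clear_value A
  set B : M → ℝ≥0∞ := fun y =>
    ENNReal.ofReal (μ (T + ε) o y) * (ENNReal.ofReal (μ T o y)) ^ (-(r / p)) with hB_def
  clear_value B
  have hm1ne0 : ∀ y, ENNReal.ofReal (μ T o y) ≠ 0 := fun y =>
    (ENNReal.ofReal_pos.2 (hm1pos y)).ne'
  have hm1netop : ∀ y, ENNReal.ofReal (μ T o y) ≠ ⊤ := fun y => ENNReal.ofReal_ne_top
  have hABeq : ∀ y, ENNReal.ofReal (μ (T + ε) o y) * (‖f y‖₊ : ℝ≥0∞) ^ r = A y * B y := by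
    intro y
    simp only [hA_def, hB_def]
    have : (ENNReal.ofReal (μ T o y)) ^ (r / p) * (ENNReal.ofReal (μ T o y)) ^ (-(r / p))
        = 1 := by
      rw [← ENNReal.rpow_add _ _ (hm1ne0 y) (hm1netop y)]
      simp
    calc ENNReal.ofReal (μ (T + ε) o y) * (‖f y‖₊ : ℝ≥0∞) ^ r
        = (‖f y‖₊ : ℝ≥0∞) ^ r * ENNReal.ofReal (μ (T + ε) o y) *
            ((ENNReal.ofReal (μ T o y)) ^ (r / p) *
              (ENNReal.ofReal (μ T o y)) ^ (-(r / p))) := by rw [this]; ring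
      _ = (‖f y‖₊ : ℝ≥0∞) ^ r * (ENNReal.ofReal (μ T o y)) ^ (r / p) *
            (ENNReal.ofReal (μ (T + ε) o y) * (ENNReal.ofReal (μ T o y)) ^ (-(r / p))) := by
          ring
  have hpow1 : Measurable fun y : M => (ENNReal.ofReal (μ T o y)) ^ (r / p) :=
    ENNReal.continuous_rpow_const.measurable.comp hmeas1
  have hpow1' : Measurable fun y : M => (ENNReal.ofReal (μ T o y)) ^ (-(r / p)) :=
    ENNReal.continuous_rpow_const.measurable.comp hmeas1
  have hAmeas : AEMeasurable A V := by
    rw [hA_def]; exact hFmeas.mul hpow1.aemeasurable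
  have hBmeas : AEMeasurable B V := by
    rw [hB_def]; exact hmeas2.aemeasurable.mul hpow1'.aemeasurable
  have holder := ENNReal.lintegral_mul_le_Lp_mul_Lq V hconj hAmeas hBmeas
  -- the first factor is finite
  have hAint : ∫⁻ y, A y ^ s ∂V < ⊤ := by
    have hAs : ∀ y, A y ^ s = (‖f y‖₊ : ℝ≥0∞) ^ p * ENNReal.ofReal (μ T o y) := by
      intro y
      simp only [hA_def]
      rw [ENNReal.mul_rpow_of_nonneg _ _ (le_of_lt hconj.pos),
        ← ENNReal.rpow_mul, ← ENNReal.rpow_mul, hrs, hrps, ENNReal.rpow_one]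
    simp only [hAs]
    have hfp := lintegral_rpow_enorm_lt_top_of_eLpNorm_lt_top
      (by simp [ENNReal.ofReal_eq_zero, not_le, hp0] : ENNReal.ofReal p ≠ 0)
      ENNReal.ofReal_ne_top hf.2
    rw [ENNReal.toReal_ofReal hp0.le] at hfp
    change (∫⁻ a, (‖f a‖₊ : ℝ≥0∞) ^ p ∂(V.withDensity fun y => ENNReal.ofReal (μ T o y))) < ⊤ at hfp
    have hFp : AEMeasurable (fun y => (‖f y‖₊ : ℝ≥0∞) ^ p) V :=
      ENNReal.continuous_rpow_const.measurable.comp_aemeasurable hfV.enorm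
    rw [lintegral_withDensity_eq_lintegral_mul₀ hmeas1.aemeasurable hFp] at hfp
    simpa only [Pi.mul_apply, mul_comm] using hfp
  -- the second factor is finite
  have hBint : ∫⁻ y, B y ^ q ∂V < ⊤ := by
    have hBq : ∀ y, B y ^ q ≤ ENNReal.ofReal K * ENNReal.ofReal (Real.sqrt (μ T o y)) := by
      intro y
      simp only [hB_def]
      have h1 : (ENNReal.ofReal (μ (T + ε) o y)) ^ q ≤
          ENNReal.ofReal K * (ENNReal.ofReal (μ T o y)) ^ (q - 1/2) := by
        rw [ENNReal.ofReal_rpow_of_nonneg (hnonneg _ _ _) hq0.le,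
          ENNReal.ofReal_rpow_of_nonneg (hnonneg _ _ _) hqh.le,
          ← ENNReal.ofReal_mul hK.le]
        exact ENNReal.ofReal_le_ofReal (key y)
      calc (ENNReal.ofReal (μ (T + ε) o y) * (ENNReal.ofReal (μ T o y)) ^ (-(r / p))) ^ q
          = (ENNReal.ofReal (μ (T + ε) o y)) ^ q *
              (ENNReal.ofReal (μ T o y)) ^ (-(r / p) * q) := by
            rw [ENNReal.mul_rpow_of_nonneg _ _ hq0.le, ← ENNReal.rpow_mul]
        _ ≤ ENNReal.ofReal K * (ENNReal.ofReal (μ T o y)) ^ (q - 1/2) *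
              (ENNReal.ofReal (μ T o y)) ^ (-(r / p) * q) :=
            mul_le_mul_left h1 _
        _ = ENNReal.ofReal K * ENNReal.ofReal (Real.sqrt (μ T o y)) := by
            rw [mul_assoc, ← ENNReal.rpow_add _ _ (hm1ne0 y) (hm1netop y)]
            have : q - 1/2 + -(r / p) * q = 1/2 := by
              have h := hrpq
              linarith [h]
            rw [this, ENNReal.ofReal_rpow_of_nonneg (hnonneg T o y) (by norm_num : (0:ℝ) ≤ 1/2),
              Real.sqrt_eq_rpow]
    calc ∫⁻ y, B y ^ q ∂V
        ≤ ∫⁻ y, ENNReal.ofReal K * ENNReal.ofReal (Real.sqrt (μ T o y)) ∂V :=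
          lintegral_mono hBq
      _ = ENNReal.ofReal K * ∫⁻ y, ENNReal.ofReal (Real.sqrt (μ T o y)) ∂V :=
          lintegral_const_mul' _ _ ENNReal.ofReal_ne_top
      _ < ⊤ := ENNReal.mul_lt_top ENNReal.ofReal_lt_top hint
  calc ∫⁻ y, ENNReal.ofReal (μ (T + ε) o y) * (‖f y‖₊ : ℝ≥0∞) ^ r ∂V
      = ∫⁻ y, (A * B) y ∂V := by
        simp only [Pi.mul_apply]
        exact lintegral_congr hABeq
    _ ≤ (∫⁻ y, A y ^ s ∂V) ^ (1/s) * (∫⁻ y, B y ^ q ∂V) ^ (1/q) := holder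
    _ < ⊤ := ENNReal.mul_lt_top
        (ENNReal.rpow_lt_top_of_nonneg hconj.one_div_nonneg hAint.ne)
        (ENNReal.rpow_lt_top_of_nonneg hconj.symm.one_div_nonneg hBint.ne)
end
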